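/- arXiv:0710.5907 — 4 statements merged into one kernel-verified Lean document; each statement's English description precedes it below -/
import Mathlib

section
/- For all real numbers 0 < y₁ < y₂ and every p ∈ [1,∞], f(y₁, y₂, p) ≤ f(y₁, y₂, 2); that is, the function p ↦ f(y₁, y₂, p) attains its maximum on [1,∞] at p = 2. -/
open Real
open scoped ENNReal

/-- The coefficient `f(y₁,y₂,p)` for `p ∈ (1,∞)`, with dual exponent `q`. -/
noncomputable def fCoeff (y₁ y₂ p q : ℝ) : ℝ :=
  ((y₁ + 2) ^ 2 * y₂ ^ 2 * Gamma ((y₁ + 2) / p) * Gamma ((y₁ + 2) / q) *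
      Gamma (y₂ / p) * Gamma (y₂ / q)) /
    (y₁ ^ 2 * (y₂ + 2) ^ 2 * Gamma ((y₂ + 2) / p) * Gamma ((y₂ + 2) / q) *
      Gamma (y₁ / p) * Gamma (y₁ / q))

/-- The coefficient `f(y₁,y₂,1) = f(y₁,y₂,∞)`. -/
noncomputable def fCoeffOne (y₁ y₂ : ℝ) : ℝ :=
  ((y₁ + 2) * y₂ * Gamma (y₁ + 2) * Gamma y₂) /
    (y₁ * (y₂ + 2) * Gamma (y₂ + 2) * Gamma y₁)

/-- The coefficient `f(y₁,y₂,p)` for all `p ∈ [1,∞]`; for `1 < p < ∞` the dual exponent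
is `q = p/(p-1)`. -/
noncomputable def fCoeffFull (y₁ y₂ : ℝ) (p : ℝ≥0∞) : ℝ :=
  if p = 1 ∨ p = ∞ then fCoeffOne y₁ y₂
  else fCoeff y₁ y₂ p.toReal (p.toReal / (p.toReal - 1))


open Real Set MeasureTheory Filter Topology
open scoped ENNReal NNReal

lemma auxA_nonneg {x : ℝ} (hx : 0 ≤ x) : 0 ≤ (x - 2) * exp x + (x + 2) := by
  -- A 0 = 0, A' x = (x-1) e^x + 1 ≥ 0  (since (1-x) ≤ exp (-x))
  have h1 : ∀ y : ℝ, 0 ≤ (y - 1) * exp y + 1 := by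
    intro y
    have h2 : 1 - y ≤ exp (-y) := by linarith [Real.add_one_le_exp (-y)]
    have h3 : (1 - y) * exp y ≤ exp (-y) * exp y :=
      mul_le_mul_of_nonneg_right h2 (exp_pos y).le
    rw [← Real.exp_add] at h3
    simp at h3
    nlinarith
  have hmono : MonotoneOn (fun x : ℝ => (x - 2) * exp x + (x + 2)) (Ici 0) := by
    apply monotoneOn_of_deriv_nonneg (convex_Ici 0)
    · fun_prop
    · intro y hy
      exact (((hasDerivAt_id y).sub_const 2 |>.mul (Real.hasDerivAt_exp y)).add
        ((hasDerivAt_id y).add_const 2)).differentiableAt.differentiableWithinAt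
    · intro y hy
      have hd : HasDerivAt (fun x : ℝ => (x - 2) * exp x + (x + 2))
          ((y - 1) * exp y + 1) y := by
        have := (((hasDerivAt_id y).sub_const 2).mul (Real.hasDerivAt_exp y)).add
          ((hasDerivAt_id y).add_const 2)
        refine this.congr_deriv ?_
        simp only [id_eq]; ring
      rw [hd.deriv]
      exact h1 y
  have h0 : (0:ℝ) ∈ Ici (0:ℝ) := mem_Ici.2 le_rfl
  have := hmono h0 (mem_Ici.2 hx) hx
  simpa using this

lemma w_convexOn : ConvexOn ℝ (Ioi (0:ℝ)) (fun x => x + x / (exp x - 1)) := by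
  have hden : ∀ x : ℝ, x ∈ Ioi (0:ℝ) → exp x - 1 ≠ 0 := by
    intro x hx
    have : (1:ℝ) < exp x := by
      rw [← Real.exp_zero]; exact Real.exp_lt_exp.2 hx
    exact ne_of_gt (by linarith)
  have hφ : ConvexOn ℝ (Ioi (0:ℝ)) (fun x => x / (exp x - 1)) := by
    set d1 : ℝ → ℝ := fun x => ((exp x - 1) - x * exp x) / (exp x - 1)^2 with hd1def
    set d2 : ℝ → ℝ := fun x => exp x * ((x - 2) * exp x + (x + 2)) / (exp x - 1)^3 with hd2def
    have hder1 : ∀ x ∈ Ioi (0:ℝ), HasDerivAt (fun x => x / (exp x - 1)) (d1 x) x := by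
      intro x hx
      have := (hasDerivAt_id x).div ((Real.hasDerivAt_exp x).sub_const 1) (hden x hx)
      refine this.congr_deriv ?_
      simp only [hd1def, id_eq]
      ring
    have hder2 : ∀ x ∈ Ioi (0:ℝ), HasDerivAt d1 (d2 x) x := by
      intro x hx
      have hN : HasDerivAt (fun x : ℝ => (exp x - 1) - x * exp x) (-(x * exp x)) x := by
        have := ((Real.hasDerivAt_exp x).sub_const 1).sub
          ((hasDerivAt_id x).mul (Real.hasDerivAt_exp x))
        refine this.congr_deriv ?_
        simp only [id_eq]; ring
      have hD : HasDerivAt (fun x : ℝ => (exp x - 1)^2) (2 * (exp x - 1) * exp x) x := by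
        have := ((Real.hasDerivAt_exp x).sub_const 1).pow 2
        refine this.congr_deriv ?_
        ring
      have hD0 : ((exp x - 1)^2 : ℝ) ≠ 0 := pow_ne_zero _ (hden x hx)
      have := hN.div hD hD0
      refine this.congr_deriv ?_
      have h := hden x hx
      simp only [hd2def]
      field_simp
      ring
    have hdiff1 : DifferentiableOn ℝ (fun x : ℝ => x / (exp x - 1)) (Ioi 0) :=
      fun x hx => (hder1 x hx).differentiableAt.differentiableWithinAt
    have hderiv_eq : ∀ x ∈ Ioi (0:ℝ), deriv (fun x : ℝ => x / (exp x - 1)) x = d1 x :=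
      fun x hx => (hder1 x hx).deriv
    apply convexOn_of_deriv2_nonneg (convex_Ioi 0)
    · exact hdiff1.continuousOn
    · rwa [interior_Ioi]
    · rw [interior_Ioi]
      intro x hx
      have hev : deriv (fun x : ℝ => x / (exp x - 1)) =ᶠ[nhds x] d1 :=
        Filter.eventuallyEq_of_mem (Ioi_mem_nhds hx) hderiv_eq
      exact ((hder2 x hx).differentiableAt.congr_of_eventuallyEq hev).differentiableWithinAt
    · rw [interior_Ioi]
      intro x hx
      have hev : deriv (fun x : ℝ => x / (exp x - 1)) =ᶠ[nhds x] d1 :=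
        Filter.eventuallyEq_of_mem (Ioi_mem_nhds hx) hderiv_eq
      have : deriv^[2] (fun x : ℝ => x / (exp x - 1)) x = d2 x := by
        simp only [Function.iterate_succ, Function.iterate_zero, Function.comp_apply, id]
        rw [hev.deriv_eq]
        exact (hder2 x hx).deriv
      rw [this, hd2def]
      have h1 : (0:ℝ) < exp x := exp_pos x
      have h2 : (0:ℝ) < exp x - 1 := by
        have : (1:ℝ) < exp x := by rw [← Real.exp_zero]; exact Real.exp_lt_exp.2 hx
        linarith
      have h3 := auxA_nonneg (le_of_lt hx)
      positivity
  have hid : ConvexOn ℝ (Ioi (0:ℝ)) (fun x : ℝ => x) := convexOn_id (convex_Ioi 0)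
  exact hid.add hφ

lemma one_sub_exp_neg_pos {x : ℝ} (hx : 0 < x) : 0 < 1 - exp (-x) := by
  have h : exp (-x) < exp 0 := Real.exp_lt_exp.2 (by linarith)
  rw [Real.exp_zero] at h
  linarith

lemma w_value {x : ℝ} (hx : 0 < x) : x + x / (exp x - 1) = x / (1 - exp (-x)) := by
  have h1 : (1:ℝ) < exp x := by rw [← Real.exp_zero]; exact Real.exp_lt_exp.2 hx
  have h2 : exp x - 1 ≠ 0 := ne_of_gt (by linarith)
  have h3 : 1 - exp (-x) ≠ 0 := ne_of_gt (one_sub_exp_neg_pos hx)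
  rw [Real.exp_neg] at h3 ⊢
  have h4 : exp x ≠ 0 := (exp_pos x).ne'
  field_simp
  ring

lemma kernel_jensen {a b σ : ℝ} (ha : 0 < a) (hb : 0 < b) (hab : a + b = 1) (hσ : 0 < σ) :
    2 * σ / (1 - exp (-(2*σ))) ≤ σ / (1 - exp (-(σ/a))) + σ / (1 - exp (-(σ/b))) := by
  have hpa : (0:ℝ) < σ/a := div_pos hσ ha
  have hpb : (0:ℝ) < σ/b := div_pos hσ hb
  have hj := w_convexOn.2 (mem_Ioi.2 hpa) (mem_Ioi.2 hpb) ha.le hb.le hab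
  simp only [smul_eq_mul] at hj
  have hsum : a * (σ/a) + b * (σ/b) = 2*σ := by field_simp; ring
  rw [hsum] at hj
  rw [w_value (by linarith : (0:ℝ) < 2*σ), w_value hpa, w_value hpb] at hj
  have ea : a * ((σ/a) / (1 - exp (-(σ/a)))) = σ / (1 - exp (-(σ/a))) := by
    rw [← mul_div_assoc, mul_div_cancel₀ _ ha.ne']
  have eb : b * ((σ/b) / (1 - exp (-(σ/b)))) = σ / (1 - exp (-(σ/b))) := by
    rw [← mul_div_assoc, mul_div_cancel₀ _ hb.ne']
  rw [ea, eb] at hj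
  exact hj

lemma kernel_endpoint {σ : ℝ} (hσ : 0 < σ) :
    2 * σ / (1 - exp (-(2*σ))) ≤ σ + σ / (1 - exp (-σ)) := by
  have h1 : 0 < 1 - exp (-σ) := one_sub_exp_neg_pos hσ
  have h2 : 0 < 1 - exp (-(2*σ)) := one_sub_exp_neg_pos (by linarith)
  have hu : exp (-(2*σ)) = exp (-σ) * exp (-σ) := by
    rw [← Real.exp_add]; ring_nf
  set u := exp (-σ) with hudef
  have hu1 : 0 < u := exp_pos _
  rw [hu] at h2 ⊢
  rw [div_le_iff₀ h2]
  have h3 : σ + σ / (1 - u) = (σ * (2 - u)) / (1 - u) := by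
    field_simp; ring
  rw [h3, div_mul_eq_mul_div, le_div_iff₀ h1]
  nlinarith [mul_nonneg (mul_nonneg hσ.le hu1.le) (sq_nonneg (1-u))]

lemma hasDerivAt_neg_mul (t x : ℝ) : HasDerivAt (fun x : ℝ => -(t*x)) (-t) x := by
  have := ((hasDerivAt_id x).const_mul t).neg
  simp only [id_eq, mul_one] at this
  exact this

/-- value of `∫_{0}^∞ e^{-t x} dx = 1/t`. -/
lemma integral_exp_neg_mul_Ioi {t : ℝ} (ht : 0 < t) :
    ∫ x in Ioi (0:ℝ), exp (-(t*x)) = 1/t := by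
  have hderiv : ∀ x ∈ Ici (0:ℝ), HasDerivAt (fun x => -exp (-(t*x))/t) (exp (-(t*x))) x := by
    intro x _
    have := ((hasDerivAt_neg_mul t x).exp.neg).div_const t
    refine this.congr_deriv ?_
    field_simp
  have hint : IntegrableOn (fun x => exp (-(t*x))) (Ioi (0:ℝ)) := by
    have := exp_neg_integrableOn_Ioi 0 ht
    simpa [neg_mul] using this
  have h2 : Tendsto (fun x : ℝ => t * x) atTop atTop :=
    Tendsto.const_mul_atTop ht tendsto_id
  have htend : Tendsto (fun x => -exp (-(t*x))/t) atTop (𝓝 0) := by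
    have h3 : Tendsto (fun x : ℝ => -(t*x)) atTop atBot := tendsto_neg_atTop_atBot.comp h2
    have := ((Real.tendsto_exp_atBot.comp h3).neg).div_const t
    simpa using this
  have := MeasureTheory.integral_Ioi_of_hasDerivAt_of_tendsto'
    (f := fun x => -exp (-(t*x))/t) (f' := fun x => exp (-(t*x))) hderiv hint htend
  rw [this]
  simp [neg_div]

/-- Frullani-type integral. -/
lemma frullani {A B : ℝ} (hB : 0 < B) (hBA : B ≤ A) :
    IntegrableOn (fun x => (exp (-(B*x)) - exp (-(A*x))) / x) (Ioi (0:ℝ)) ∧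
    ∫ x in Ioi (0:ℝ), (exp (-(B*x)) - exp (-(A*x))) / x = log A - log B := by
  have hA : 0 < A := lt_of_lt_of_le hB hBA
  set μ := volume.restrict (Ioi (0:ℝ)) with hμ
  set ν := volume.restrict (Ioc B A) with hν
  haveI hνfin : IsFiniteMeasure ν := by
    constructor
    rw [hν, Measure.restrict_apply_univ]
    exact measure_Ioc_lt_top
  have hcont : Continuous (fun z : ℝ × ℝ => exp (-(z.2 * z.1))) := by fun_prop
  have hB1 : Integrable (fun x : ℝ => exp (-(B*x))) μ := by
    have := exp_neg_integrableOn_Ioi 0 hB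
    simpa [neg_mul, IntegrableOn, hμ] using this
  have hbound : Integrable (fun z : ℝ × ℝ => exp (-(B * z.1)) * 1) (μ.prod ν) :=
    Integrable.mul_prod (f := fun x : ℝ => exp (-(B*x))) (g := fun _ : ℝ => (1:ℝ))
      hB1 (integrable_const 1)
  have hint : Integrable (fun z : ℝ × ℝ => exp (-(z.2 * z.1))) (μ.prod ν) := by
    apply Integrable.mono' hbound hcont.aestronglyMeasurable
    rw [hμ, hν, Measure.prod_restrict]
    refine (ae_restrict_iff' ((measurableSet_Ioi).prod measurableSet_Ioc)).2 ?_
    refine Eventually.of_forall (fun z hz => ?_)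
    obtain ⟨hz1, hz2⟩ := hz
    rw [norm_of_nonneg (exp_pos _).le, mul_one]
    apply Real.exp_le_exp.2
    have h1 := hz2.1
    have h0 : (0:ℝ) < z.1 := hz1
    nlinarith
  have hswap := MeasureTheory.integral_integral_swap
    (f := fun x t => exp (-(t * x))) (μ := μ) (ν := ν) hint
  have hinner : ∀ x ∈ Ioi (0:ℝ), (∫ t, exp (-(t*x)) ∂ν) = (exp (-(B*x)) - exp (-(A*x))) / x := by
    intro x hx
    have hx0 : (0:ℝ) < x := hx
    rw [hν, ← intervalIntegral.integral_of_le hBA]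
    have hd : ∀ t ∈ uIcc B A, HasDerivAt (fun t => -exp (-(t*x))/x) (exp (-(t*x))) t := by
      intro t _
      have h1 : HasDerivAt (fun t : ℝ => -(t*x)) (-x) t := by
        have := ((hasDerivAt_id t).mul_const x).neg
        simp only [id_eq, one_mul] at this
        exact this
      have := (h1.exp.neg).div_const x
      refine this.congr_deriv ?_
      field_simp
    have hci : IntervalIntegrable (fun t => exp (-(t*x))) volume B A := by
      apply Continuous.intervalIntegrable; fun_prop
    rw [intervalIntegral.integral_eq_sub_of_hasDerivAt hd hci]
    field_simp
    ring
  have hval : ∫ t, (∫ x, exp (-(t*x)) ∂μ) ∂ν = log A - log B := by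
    have h1 : ∀ t ∈ Ioc B A, (∫ x, exp (-(t*x)) ∂μ) = 1/t := by
      intro t ht
      rw [hμ]
      exact integral_exp_neg_mul_Ioi (lt_trans hB ht.1)
    rw [hν, setIntegral_congr_fun measurableSet_Ioc h1, ← intervalIntegral.integral_of_le hBA]
    simp_rw [one_div]
    rw [integral_inv_of_pos hB hA, log_div hA.ne' hB.ne']
  constructor
  · have h2 := hint.integral_prod_left
    apply h2.congr
    rw [hμ]
    refine (ae_restrict_iff' measurableSet_Ioi).2 (Eventually.of_forall (fun x hx => ?_))
    exact (hinner x hx)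
  · calc ∫ x in Ioi (0:ℝ), (exp (-(B*x)) - exp (-(A*x))) / x
        = ∫ x, (∫ t, exp (-(t*x)) ∂ν) ∂μ := by
          rw [hμ]
          apply setIntegral_congr_fun measurableSet_Ioi
          intro x hx
          exact (hinner x hx).symm
      _ = ∫ t, (∫ x, exp (-(t*x)) ∂μ) ∂ν := hswap
      _ = log A - log B := hval

lemma four_point {u₁ u₂ v₁ v₂ : ℝ} (hu : 0 < u₁) (hu2 : u₁ ≤ u₂) (hv : 0 < v₁) (hv2 : v₁ ≤ v₂) :
    IntegrableOn
      (fun x => (exp (-(u₁*x)) - exp (-(u₂*x)) - exp (-(v₁*x)) + exp (-(v₂*x))) / x)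
      (Ioi (0:ℝ)) ∧
    ∫ x in Ioi (0:ℝ), (exp (-(u₁*x)) - exp (-(u₂*x)) - exp (-(v₁*x)) + exp (-(v₂*x))) / x
      = (log u₂ - log u₁) - (log v₂ - log v₁) := by
  obtain ⟨hi1, he1⟩ := frullani hu hu2
  obtain ⟨hi2, he2⟩ := frullani hv hv2
  have hfun : ∀ x : ℝ,
      (exp (-(u₁*x)) - exp (-(u₂*x))) / x - (exp (-(v₁*x)) - exp (-(v₂*x))) / x
      = (exp (-(u₁*x)) - exp (-(u₂*x)) - exp (-(v₁*x)) + exp (-(v₂*x))) / x := by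
    intro x
    rw [div_sub_div_same]
    ring_nf
  constructor
  · have := hi1.sub hi2
    exact this.congr (Eventually.of_forall (fun x => by simpa using hfun x))
  · rw [← funext hfun, integral_sub hi1 hi2, he1, he2]

/-- nonnegativity of the basic factor -/
lemma G_nonneg {y₁ y₂ : ℝ} (h12 : y₁ ≤ y₂) {σ : ℝ} (hσ : 0 < σ) :
    0 ≤ (1 - exp (-(2*σ))) * (exp (-(y₁*σ)) - exp (-(y₂*σ))) := by
  apply mul_nonneg
  · have : exp (-(2*σ)) ≤ exp 0 := by
      apply Real.exp_le_exp.2; nlinarith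
    simp only [Real.exp_zero] at this; linarith
  · have : exp (-(y₂*σ)) ≤ exp (-(y₁*σ)) := by
      apply Real.exp_le_exp.2; nlinarith
    linarith

lemma one_sub_exp_neg_pos' {x : ℝ} (hx : 0 < x) : 0 < 1 - exp (-x) := by
  have h : exp (-x) < exp 0 := Real.exp_lt_exp.2 (by linarith)
  rw [Real.exp_zero] at h; linarith

/-- bound `1 - e^{-2σ} ≤ n (1 - e^{-σ/c})` with `n = ⌈2c⌉₊`. -/
lemma one_sub_exp_ratio {c σ : ℝ} (hc : 0 < c) (hσ : 0 < σ) :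
    1 - exp (-(2*σ)) ≤ (⌈2*c⌉₊ : ℝ) * (1 - exp (-(σ/c))) := by
  set n := ⌈2*c⌉₊ with hn
  have hcn : 2*c ≤ (n:ℝ) := Nat.le_ceil _
  have hq : exp (-(2*σ)) ≥ exp (-((n:ℝ)*(σ/c))) := by
    apply Real.exp_le_exp.2
    have h1 : 2*σ = (2*c)*(σ/c) := by field_simp
    have h2 : (2*c)*(σ/c) ≤ (n:ℝ)*(σ/c) := by
      apply mul_le_mul_of_nonneg_right hcn (by positivity)
    nlinarith
  have key : 1 - exp (-((n:ℝ)*(σ/c))) ≤ (n:ℝ) * (1 - exp (-(σ/c))) := by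
    set q := exp (-(σ/c)) with hqdef
    have hq0 : 0 < q := exp_pos _
    have hq1 : q ≤ 1 := by
      have := (one_sub_exp_neg_pos' (show (0:ℝ) < σ/c by positivity))
      linarith
    have hpow : exp (-((n:ℝ)*(σ/c))) = q ^ n := by
      rw [hqdef, ← Real.exp_nat_mul]
      congr 1
      ring
    rw [hpow]
    have hgeom : 1 - q^n = (∑ i ∈ Finset.range n, q^i) * (1 - q) := by
      have := geom_sum_mul q n
      nlinarith [this]
    rw [hgeom]
    have hsum : (∑ i ∈ Finset.range n, q^i) ≤ (n:ℝ) := by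
      calc (∑ i ∈ Finset.range n, q^i) ≤ ∑ i ∈ Finset.range n, (1:ℝ) := by
            apply Finset.sum_le_sum
            intro i _
            exact pow_le_one₀ hq0.le hq1
        _ = (n:ℝ) := by simp
    have h1mq : 0 ≤ 1 - q := by linarith
    nlinarith
  linarith

/-- `e^{-y₁σ} - e^{-y₂σ} ≤ (y₂-y₁) σ e^{-y₁ σ}`. -/
lemma exp_diff_bound {y₁ y₂ σ : ℝ} (h12 : y₁ ≤ y₂) (hσ : 0 < σ) :
    exp (-(y₁*σ)) - exp (-(y₂*σ)) ≤ (y₂ - y₁) * σ * exp (-(y₁*σ)) := by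
  have key : exp (-(y₂*σ)) = exp (-(y₁*σ)) * exp (-((y₂-y₁)*σ)) := by
    rw [← Real.exp_add]; congr 1; ring
  have h1 : 1 - (y₂-y₁)*σ ≤ exp (-((y₂-y₁)*σ)) := by
    linarith [Real.add_one_le_exp (-((y₂-y₁)*σ))]
  have h2 : 0 < exp (-(y₁*σ)) := exp_pos _
  rw [key]
  nlinarith

/-- Integrability of the main kernel. -/
lemma kernel_integrable {y₁ y₂ c : ℝ} (h1 : 0 < y₁) (h12 : y₁ < y₂) (hc : 0 < c) :
    IntegrableOn (fun σ =>
      (1 - exp (-(2*σ))) * (exp (-(y₁*σ)) - exp (-(y₂*σ))) / (σ * (1 - exp (-(σ/c)))))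
      (Ioi (0:ℝ)) := by
  set K : ℝ := (⌈2*c⌉₊ : ℝ) * (y₂ - y₁) with hK
  have hbound : Integrable (fun σ : ℝ => K * exp (-(y₁*σ))) (volume.restrict (Ioi 0)) := by
    have := exp_neg_integrableOn_Ioi 0 h1
    exact (this.congr_fun (fun x _ => by rw [neg_mul]) measurableSet_Ioi).const_mul K
  apply Integrable.mono' hbound
  · apply ContinuousOn.aestronglyMeasurable _ measurableSet_Ioi
    apply ContinuousOn.div
    · fun_prop
    · fun_prop
    · intro σ hσ
      have hσ0 : (0:ℝ) < σ := hσ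
      have := one_sub_exp_neg_pos' (show (0:ℝ) < σ/c by positivity)
      positivity
  · refine (ae_restrict_iff' measurableSet_Ioi).2 (Eventually.of_forall (fun σ hσ => ?_))
    have hσ0 : (0:ℝ) < σ := hσ
    have hden1 := one_sub_exp_neg_pos' (show (0:ℝ) < σ/c by positivity)
    have hdenpos : 0 < σ * (1 - exp (-(σ/c))) := by positivity
    rw [norm_of_nonneg (div_nonneg (G_nonneg h12.le hσ0) hdenpos.le)]
    rw [div_le_iff₀ hdenpos]
    have b1 := one_sub_exp_ratio hc hσ0
    have b2 := exp_diff_bound h12.le hσ0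
    have hn2 : 0 ≤ exp (-(y₁*σ)) - exp (-(y₂*σ)) := by
      have : exp (-(y₂*σ)) ≤ exp (-(y₁*σ)) := by apply Real.exp_le_exp.2; nlinarith
      linarith
    have hnonneg1 : (0:ℝ) ≤ (⌈2*c⌉₊:ℝ) * (1 - exp (-(σ/c))) := by positivity
    calc (1 - exp (-(2*σ))) * (exp (-(y₁*σ)) - exp (-(y₂*σ)))
        ≤ ((⌈2*c⌉₊:ℝ) * (1 - exp (-(σ/c)))) * ((y₂ - y₁) * σ * exp (-(y₁*σ))) :=
          mul_le_mul b1 b2 hn2 hnonneg1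
      _ = K * exp (-(y₁*σ)) * (σ * (1 - exp (-(σ/c)))) := by rw [hK]; ring

/-- Integrability of the endpoint kernel `G σ / σ`. -/
lemma kernel_integrable_end {y₁ y₂ : ℝ} (h1 : 0 < y₁) (h12 : y₁ < y₂) :
    IntegrableOn (fun σ =>
      (1 - exp (-(2*σ))) * (exp (-(y₁*σ)) - exp (-(y₂*σ))) / σ) (Ioi (0:ℝ)) := by
  have hbound : Integrable (fun σ : ℝ => (y₂-y₁) * exp (-(y₁*σ))) (volume.restrict (Ioi 0)) := by
    have := exp_neg_integrableOn_Ioi 0 h1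
    exact (this.congr_fun (fun x _ => by rw [neg_mul]) measurableSet_Ioi).const_mul _
  apply Integrable.mono' hbound
  · apply ContinuousOn.aestronglyMeasurable _ measurableSet_Ioi
    apply ContinuousOn.div
    · fun_prop
    · fun_prop
    · intro σ hσ
      exact ne_of_gt hσ
  · refine (ae_restrict_iff' measurableSet_Ioi).2 (Eventually.of_forall (fun σ hσ => ?_))
    have hσ0 : (0:ℝ) < σ := hσ
    rw [norm_of_nonneg (div_nonneg (G_nonneg h12.le hσ0) hσ0.le)]
    rw [div_le_iff₀ hσ0]
    have b2 := exp_diff_bound h12.le hσ0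
    have h3 : 1 - exp (-(2*σ)) ≤ 1 := by linarith [exp_pos (-(2*σ))]
    have hn2 : 0 ≤ exp (-(y₁*σ)) - exp (-(y₂*σ)) := by
      have : exp (-(y₂*σ)) ≤ exp (-(y₁*σ)) := by apply Real.exp_le_exp.2; nlinarith
      linarith
    calc (1 - exp (-(2*σ))) * (exp (-(y₁*σ)) - exp (-(y₂*σ)))
        ≤ 1 * ((y₂ - y₁) * σ * exp (-(y₁*σ))) := mul_le_mul h3 b2 hn2 (by norm_num)
      _ = (y₂-y₁) * exp (-(y₁*σ)) * σ := by ring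

lemma Lc_eq {y₁ y₂ c : ℝ} (h1 : 0 < y₁) (h12 : y₁ < y₂) (hc : 0 < c) :
    log (Gamma (c*y₁)) + log (Gamma (c*(y₂+2))) - log (Gamma (c*(y₁+2))) - log (Gamma (c*y₂))
      = ∫ σ in Ioi (0:ℝ),
          (1 - exp (-(2*σ))) * (exp (-(y₁*σ)) - exp (-(y₂*σ))) / (σ * (1 - exp (-(σ/c)))) := by
  have hy2 : (0:ℝ) < y₂ := lt_trans h1 h12
  set T : ℕ → ℝ := fun k =>
    (log (c*(y₁+2)+k) - log (c*y₁+k)) - (log (c*(y₂+2)+k) - log (c*y₂+k)) with hT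
  set g : ℕ → ℝ → ℝ := fun k σ =>
    exp (-((k:ℝ)/c*σ)) * ((1 - exp (-(2*σ))) * (exp (-(y₁*σ)) - exp (-(y₂*σ)))) / σ with hg
  set L : ℝ := log (Gamma (c*y₁)) + log (Gamma (c*(y₂+2))) - log (Gamma (c*(y₁+2)))
    - log (Gamma (c*y₂)) with hLdef
  -- step 1 : per-k integral identity
  have hstep1 : ∀ k : ℕ, IntegrableOn (g k) (Ioi 0) ∧ ∫ σ in Ioi (0:ℝ), g k σ = T k := by
    intro k
    have hkc : (0:ℝ) ≤ (k:ℝ)/c := by positivity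
    have h4 := four_point (u₁ := y₁ + (k:ℝ)/c) (u₂ := (y₁+2) + (k:ℝ)/c)
      (v₁ := y₂ + (k:ℝ)/c) (v₂ := (y₂+2) + (k:ℝ)/c)
      (by linarith) (by linarith) (by linarith) (by linarith)
    have hfun : ∀ x : ℝ,
        (exp (-((y₁ + (k:ℝ)/c)*x)) - exp (-(((y₁+2) + (k:ℝ)/c)*x))
          - exp (-((y₂ + (k:ℝ)/c)*x)) + exp (-(((y₂+2) + (k:ℝ)/c)*x))) / x = g k x := by
      intro x
      have e : ∀ z : ℝ, exp (-((z + (k:ℝ)/c)*x)) = exp (-(z*x)) * exp (-((k:ℝ)/c*x)) := by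
        intro z; rw [← Real.exp_add]; congr 1; ring
      have e2 : exp (-((y₁+2)*x)) = exp (-(y₁*x)) * exp (-(2*x)) := by
        rw [← Real.exp_add]; congr 1; ring
      have e3 : exp (-((y₂+2)*x)) = exp (-(y₂*x)) * exp (-(2*x)) := by
        rw [← Real.exp_add]; congr 1; ring
      simp only [hg]
      rw [e, e, e, e, e2, e3]
      ring
    have hval : (log ((y₁+2) + (k:ℝ)/c) - log (y₁ + (k:ℝ)/c))
        - (log ((y₂+2) + (k:ℝ)/c) - log (y₂ + (k:ℝ)/c)) = T k := by
      have e : ∀ z : ℝ, 0 < z → log (z + (k:ℝ)/c) = log (c*z + k) - log c := by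
        intro z hz
        rw [show z + (k:ℝ)/c = (c*z + k)/c by field_simp]
        rw [log_div (by positivity) hc.ne']
      rw [e y₁ h1, e (y₁+2) (by linarith), e y₂ hy2, e (y₂+2) (by linarith), hT]
      ring
    constructor
    · exact h4.1.congr (Eventually.of_forall (fun x => hfun x))
    · rw [← hval, ← h4.2]
      exact setIntegral_congr_fun measurableSet_Ioi (fun x _ => (hfun x).symm)
  -- nonnegativity
  have hgnonneg : ∀ k : ℕ, ∀ σ ∈ Ioi (0:ℝ), 0 ≤ g k σ := by
    intro k σ hσ
    have hσ0 : (0:ℝ) < σ := hσ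
    simp only [hg]
    exact div_nonneg (mul_nonneg (exp_pos _).le (G_nonneg h12.le hσ0)) hσ0.le
  have hTnonneg : ∀ k, 0 ≤ T k := by
    intro k
    rw [← (hstep1 k).2]
    exact setIntegral_nonneg measurableSet_Ioi (hgnonneg k)
  -- log GammaSeq formula
  have hy : ∀ z : ℝ, 0 < z → ∀ n : ℕ, 1 ≤ n →
      log (Real.GammaSeq z n) = z * log n + log (Nat.factorial n : ℝ)
        - ∑ j ∈ Finset.range (n+1), log (z + j) := by
    intro z hz n hn
    have hn0 : (0:ℝ) < n := by exact_mod_cast hn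
    have hprodpos : ∀ j ∈ Finset.range (n+1), (0:ℝ) < z + j := by
      intro j _
      have : (0:ℝ) ≤ j := Nat.cast_nonneg j
      linarith
    have hprod : (0:ℝ) < ∏ j ∈ Finset.range (n+1), (z + j) :=
      Finset.prod_pos hprodpos
    have hfact : (0:ℝ) < (Nat.factorial n : ℝ) := by
      exact_mod_cast Nat.factorial_pos n
    unfold Real.GammaSeq
    rw [log_div (by positivity) hprod.ne', log_mul (by positivity) hfact.ne',
      Real.log_rpow hn0, Real.log_prod (fun j hj => (hprodpos j hj).ne')]
  -- partial sums tendsto L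
  have hGS : ∀ z : ℝ, 0 < z →
      Tendsto (fun n => log (Real.GammaSeq z n)) atTop (𝓝 (log (Gamma z))) := by
    intro z hz
    exact (Real.GammaSeq_tendsto_Gamma z).log (Real.Gamma_pos_of_pos hz).ne'
  have hcomb : Tendsto (fun n => log (Real.GammaSeq (c*y₁) n) + log (Real.GammaSeq (c*(y₂+2)) n)
      - log (Real.GammaSeq (c*(y₁+2)) n) - log (Real.GammaSeq (c*y₂) n)) atTop (𝓝 L) := by
    rw [hLdef]
    exact (((hGS _ (by positivity)).add (hGS _ (by positivity))).sub
      (hGS _ (by positivity))).sub (hGS _ (by positivity))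
  have hident : ∀ n : ℕ, 1 ≤ n →
      ∑ k ∈ Finset.range (n+1), T k
        = log (Real.GammaSeq (c*y₁) n) + log (Real.GammaSeq (c*(y₂+2)) n)
          - log (Real.GammaSeq (c*(y₁+2)) n) - log (Real.GammaSeq (c*y₂) n) := by
    intro n hn
    rw [hy _ (by positivity) n hn, hy _ (by positivity) n hn,
      hy _ (by positivity) n hn, hy _ (by positivity) n hn]
    simp only [hT]
    rw [Finset.sum_sub_distrib, Finset.sum_sub_distrib, Finset.sum_sub_distrib]
    push_cast
    ring
  have hpartial : Tendsto (fun n => ∑ k ∈ Finset.range n, T k) atTop (𝓝 L) := by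
    rw [show (fun n => ∑ k ∈ Finset.range n, T k)
      = (fun m => ∑ k ∈ Finset.range m, T k) from rfl]
    apply (tendsto_add_atTop_iff_nat 2).mp
    have h6 : Tendsto (fun n : ℕ => log (Real.GammaSeq (c*y₁) (n+1))
        + log (Real.GammaSeq (c*(y₂+2)) (n+1))
        - log (Real.GammaSeq (c*(y₁+2)) (n+1)) - log (Real.GammaSeq (c*y₂) (n+1)))
        atTop (𝓝 L) := hcomb.comp (tendsto_add_atTop_nat 1)
    apply h6.congr
    intro n
    rw [show n + 2 = (n+1) + 1 from rfl]
    exact (hident (n+1) (by omega)).symm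
  have hmono : Monotone (fun n => ∑ k ∈ Finset.range n, T k) :=
    monotone_nat_of_le_succ (fun n => by
      rw [Finset.sum_range_succ]; linarith [hTnonneg n])
  have hsummable : Summable T :=
    summable_of_sum_range_le hTnonneg (fun n => hmono.ge_of_tendsto hpartial n)
  have htsum : ∑' k, T k = L :=
    tendsto_nhds_unique hsummable.hasSum.tendsto_sum_nat hpartial
  -- measurability
  have hmeas : ∀ k : ℕ, AEStronglyMeasurable (g k) (volume.restrict (Ioi 0)) := by
    intro k
    apply ContinuousOn.aestronglyMeasurable _ measurableSet_Ioi
    apply ContinuousOn.div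
    · fun_prop
    · exact continuousOn_id
    · intro σ hσ
      exact ne_of_gt hσ
  -- lintegral bound
  have hlint : ∑' k, ∫⁻ σ, ‖g k σ‖₊ ∂(volume.restrict (Ioi 0)) ≠ ⊤ := by
    have heq : ∀ k : ℕ, ∫⁻ (σ : ℝ) in Ioi (0:ℝ), (‖g k σ‖₊ : ℝ≥0∞)
        = ENNReal.ofReal (T k) := by
      intro k
      have hnn : 0 ≤ᵐ[volume.restrict (Ioi 0)] g k :=
        (ae_restrict_iff' measurableSet_Ioi).2 (Eventually.of_forall (hgnonneg k))
      rw [← (hstep1 k).2,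
        MeasureTheory.ofReal_integral_eq_lintegral_ofReal (hstep1 k).1 hnn]
      apply lintegral_congr_ae
      filter_upwards [hnn] with σ hσ
      rw [← Real.enorm_eq_ofReal hσ]
      rfl
    simp_rw [heq]
    rw [← ENNReal.ofReal_tsum_of_nonneg hTnonneg hsummable]
    exact ENNReal.ofReal_ne_top
  have hswap := MeasureTheory.integral_tsum hmeas hlint
  -- pointwise tsum
  have hpt : ∀ σ ∈ Ioi (0:ℝ), ∑' k, g k σ
      = (1 - exp (-(2*σ))) * (exp (-(y₁*σ)) - exp (-(y₂*σ))) / (σ * (1 - exp (-(σ/c)))) := by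
    intro σ hσ
    have hσ0 : (0:ℝ) < σ := hσ
    have hr1 : 0 < 1 - exp (-(σ/c)) := one_sub_exp_neg_pos' (by positivity)
    have hgk : ∀ k : ℕ, g k σ = (exp (-(σ/c)))^k
        * ((1 - exp (-(2*σ))) * (exp (-(y₁*σ)) - exp (-(y₂*σ))) / σ) := by
      intro k
      simp only [hg]
      rw [← Real.exp_nat_mul, mul_div_assoc]
      congr 2
      ring
    rw [tsum_congr hgk, tsum_mul_right,
      tsum_geometric_of_lt_one (exp_pos _).le (by linarith)]
    rw [eq_div_iff (by positivity)]
    field_simp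
  -- final computation
  calc log (Gamma (c*y₁)) + log (Gamma (c*(y₂+2))) - log (Gamma (c*(y₁+2))) - log (Gamma (c*y₂))
      = L := by rw [hLdef]
    _ = ∑' k, T k := htsum.symm
    _ = ∑' k, ∫ σ in Ioi (0:ℝ), g k σ := by
        exact tsum_congr (fun k => ((hstep1 k).2).symm)
    _ = ∫ σ in Ioi (0:ℝ), ∑' k, g k σ := hswap.symm
    _ = ∫ σ in Ioi (0:ℝ),
          (1 - exp (-(2*σ))) * (exp (-(y₁*σ)) - exp (-(y₂*σ))) / (σ * (1 - exp (-(σ/c)))) :=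
        setIntegral_congr_fun measurableSet_Ioi hpt

noncomputable def Rq (y₁ y₂ c : ℝ) : ℝ :=
  Gamma (c*y₁) * Gamma (c*(y₂+2)) / (Gamma (c*(y₁+2)) * Gamma (c*y₂))

lemma div_helper1 (Gv σ D : ℝ) (hσ : σ ≠ 0) (hD : D ≠ 0) :
    Gv / σ^2 * (σ / D) = Gv / (σ * D) := by
  field_simp

lemma div_helper2 (Gv σ D : ℝ) (hσ : σ ≠ 0) (hD : D ≠ 0) :
    Gv / σ^2 * (2*σ / D) = 2 * (Gv / (σ * D)) := by
  field_simp

lemma div_helper3 (Gv σ D : ℝ) (hσ : σ ≠ 0) (hD : D ≠ 0) :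
    Gv / σ^2 * (σ + σ / D) = Gv / σ + Gv / (σ * D) := by
  field_simp

section main
variable {y₁ y₂ : ℝ}

lemma Rq_pos (h1 : 0 < y₁) (h12 : y₁ < y₂) {c : ℝ} (hc : 0 < c) : 0 < Rq y₁ y₂ c := by
  have hy2 : 0 < y₂ := lt_trans h1 h12
  unfold Rq
  have g1 := Real.Gamma_pos_of_pos (show (0:ℝ) < c*y₁ by positivity)
  have g2 := Real.Gamma_pos_of_pos (show (0:ℝ) < c*(y₂+2) by positivity)
  have g3 := Real.Gamma_pos_of_pos (show (0:ℝ) < c*(y₁+2) by positivity)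
  have g4 := Real.Gamma_pos_of_pos (show (0:ℝ) < c*y₂ by positivity)
  positivity

lemma log_Rq (h1 : 0 < y₁) (h12 : y₁ < y₂) {c : ℝ} (hc : 0 < c) :
    log (Rq y₁ y₂ c) = log (Gamma (c*y₁)) + log (Gamma (c*(y₂+2)))
      - log (Gamma (c*(y₁+2))) - log (Gamma (c*y₂)) := by
  have hy2 : 0 < y₂ := lt_trans h1 h12
  have g1 := Real.Gamma_pos_of_pos (show (0:ℝ) < c*y₁ by positivity)
  have g2 := Real.Gamma_pos_of_pos (show (0:ℝ) < c*(y₂+2) by positivity)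
  have g3 := Real.Gamma_pos_of_pos (show (0:ℝ) < c*(y₁+2) by positivity)
  have g4 := Real.Gamma_pos_of_pos (show (0:ℝ) < c*y₂ by positivity)
  unfold Rq
  rw [log_div (by positivity) (by positivity), log_mul g1.ne' g2.ne', log_mul g3.ne' g4.ne']
  ring

/-- main interior comparison of the `L` quantities -/
lemma L_compare (h1 : 0 < y₁) (h12 : y₁ < y₂) {a b : ℝ}
    (ha : 0 < a) (hb : 0 < b) (hab : a + b = 1) :
    2 * log (Rq y₁ y₂ (1/2)) ≤ log (Rq y₁ y₂ a) + log (Rq y₁ y₂ b) := by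
  set G : ℝ → ℝ := fun σ => (1 - exp (-(2*σ))) * (exp (-(y₁*σ)) - exp (-(y₂*σ))) with hG
  set f : ℝ → ℝ → ℝ := fun c σ => G σ / (σ * (1 - exp (-(σ/c)))) with hf
  have hint : ∀ c : ℝ, 0 < c → IntegrableOn (f c) (Ioi (0:ℝ)) :=
    fun c hc => kernel_integrable h1 h12 hc
  have hLc : ∀ c : ℝ, 0 < c → log (Rq y₁ y₂ c) = ∫ σ in Ioi (0:ℝ), f c σ := by
    intro c hc
    rw [log_Rq h1 h12 hc, Lc_eq h1 h12 hc]
  rw [hLc a ha, hLc b hb, hLc (1/2) (by norm_num)]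
  have hpt : ∀ σ ∈ Ioi (0:ℝ), 2 * f (1/2) σ ≤ f a σ + f b σ := by
    intro σ hσ
    have hσ0 : (0:ℝ) < σ := hσ
    have hGnn : 0 ≤ G σ := G_nonneg h12.le hσ0
    have hda := one_sub_exp_neg_pos' (show (0:ℝ) < σ/a by positivity)
    have hdb := one_sub_exp_neg_pos' (show (0:ℝ) < σ/b by positivity)
    have hdh := one_sub_exp_neg_pos' (show (0:ℝ) < σ/(1/2) by positivity)
    have hkey := kernel_jensen ha hb hab hσ0
    have hmul := mul_le_mul_of_nonneg_left hkey (div_nonneg hGnn (by positivity : (0:ℝ) ≤ σ^2))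
    have e2 : σ/(1/2 : ℝ) = 2*σ := by
      rw [div_div_eq_mul_div]; ring_nf
    have hd2 : 0 < 1 - exp (-(2*σ)) := one_sub_exp_neg_pos' (by linarith)
    calc 2 * f (1/2) σ = G σ / σ^2 * (2*σ / (1 - exp (-(2*σ)))) := by
          simp only [hf]
          rw [e2, div_helper2 _ _ _ hσ0.ne' hd2.ne']
      _ ≤ G σ / σ^2 * (σ / (1 - exp (-(σ/a))) + σ / (1 - exp (-(σ/b)))) := hmul
      _ = f a σ + f b σ := by
          rw [mul_add]
          simp only [hf]
          rw [div_helper1 _ _ _ hσ0.ne' hda.ne', div_helper1 _ _ _ hσ0.ne' hdb.ne']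
  calc 2 * ∫ σ in Ioi (0:ℝ), f (1/2) σ
      = ∫ σ in Ioi (0:ℝ), 2 * f (1/2) σ := (MeasureTheory.integral_const_mul 2 _).symm
    _ ≤ ∫ σ in Ioi (0:ℝ), (f a σ + f b σ) := by
        apply setIntegral_mono_on ((hint (1/2) (by norm_num)).const_mul 2)
          ((hint a ha).add (hint b hb)) measurableSet_Ioi hpt
    _ = (∫ σ in Ioi (0:ℝ), f a σ) + ∫ σ in Ioi (0:ℝ), f b σ :=
        integral_add (hint a ha) (hint b hb)

/-- endpoint comparison -/
lemma L_compare_end (h1 : 0 < y₁) (h12 : y₁ < y₂) :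
    2 * log (Rq y₁ y₂ (1/2)) ≤ log (Rq y₁ y₂ 1)
      + (log (y₁+2) - log y₁ - (log (y₂+2) - log y₂)) := by
  have hy2 : 0 < y₂ := lt_trans h1 h12
  set G : ℝ → ℝ := fun σ => (1 - exp (-(2*σ))) * (exp (-(y₁*σ)) - exp (-(y₂*σ))) with hG
  set f : ℝ → ℝ → ℝ := fun c σ => G σ / (σ * (1 - exp (-(σ/c)))) with hf
  have hint : ∀ c : ℝ, 0 < c → IntegrableOn (f c) (Ioi (0:ℝ)) :=
    fun c hc => kernel_integrable h1 h12 hc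
  have hintE : IntegrableOn (fun σ => G σ / σ) (Ioi (0:ℝ)) := kernel_integrable_end h1 h12
  have hLc : ∀ c : ℝ, 0 < c → log (Rq y₁ y₂ c) = ∫ σ in Ioi (0:ℝ), f c σ := by
    intro c hc
    rw [log_Rq h1 h12 hc, Lc_eq h1 h12 hc]
  -- J identity
  have hJ : log (y₁+2) - log y₁ - (log (y₂+2) - log y₂) = ∫ σ in Ioi (0:ℝ), G σ / σ := by
    have h4 := four_point (u₁ := y₁) (u₂ := y₁+2) (v₁ := y₂) (v₂ := y₂+2)
      h1 (by linarith) hy2 (by linarith)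
    rw [← h4.2]
    apply setIntegral_congr_fun measurableSet_Ioi
    intro x _
    simp only [hG]
    have e2 : exp (-((y₁+2)*x)) = exp (-(y₁*x)) * exp (-(2*x)) := by
      rw [← Real.exp_add]; congr 1; ring
    have e3 : exp (-((y₂+2)*x)) = exp (-(y₂*x)) * exp (-(2*x)) := by
      rw [← Real.exp_add]; congr 1; ring
    rw [e2, e3]
    ring_nf
  rw [hLc 1 (by norm_num), hLc (1/2) (by norm_num), hJ]
  have hpt : ∀ σ ∈ Ioi (0:ℝ), 2 * f (1/2) σ ≤ f 1 σ + G σ / σ := by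
    intro σ hσ
    have hσ0 : (0:ℝ) < σ := hσ
    have hGnn : 0 ≤ G σ := G_nonneg h12.le hσ0
    have hd1 := one_sub_exp_neg_pos' hσ0
    have hkey := kernel_endpoint hσ0
    have hmul := mul_le_mul_of_nonneg_left hkey (div_nonneg hGnn (by positivity : (0:ℝ) ≤ σ^2))
    have e2 : σ/(1/2 : ℝ) = 2*σ := by
      rw [div_div_eq_mul_div]; ring_nf
    have hd2 : 0 < 1 - exp (-(2*σ)) := one_sub_exp_neg_pos' (by linarith)
    calc 2 * f (1/2) σ = G σ / σ^2 * (2*σ / (1 - exp (-(2*σ)))) := by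
          simp only [hf]
          rw [e2, div_helper2 _ _ _ hσ0.ne' hd2.ne']
      _ ≤ G σ / σ^2 * (σ + σ / (1 - exp (-σ))) := hmul
      _ = f 1 σ + G σ / σ := by
          rw [div_helper3 _ _ _ hσ0.ne' hd1.ne']
          simp only [hf]
          rw [show σ/(1:ℝ) = σ by norm_num]
          ring
  calc 2 * ∫ σ in Ioi (0:ℝ), f (1/2) σ
      = ∫ σ in Ioi (0:ℝ), 2 * f (1/2) σ := (MeasureTheory.integral_const_mul 2 _).symm
    _ ≤ ∫ σ in Ioi (0:ℝ), (f 1 σ + G σ / σ) := by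
        apply setIntegral_mono_on ((hint (1/2) (by norm_num)).const_mul 2)
          ((hint 1 (by norm_num)).add hintE) measurableSet_Ioi hpt
    _ = (∫ σ in Ioi (0:ℝ), f 1 σ) + ∫ σ in Ioi (0:ℝ), G σ / σ :=
        integral_add (hint 1 (by norm_num)) hintE

/-- interior Gamma product inequality -/
lemma gamma_ineq_interior (h1 : 0 < y₁) (h12 : y₁ < y₂) {a b : ℝ}
    (ha : 0 < a) (hb : 0 < b) (hab : a + b = 1) :
    Rq y₁ y₂ (1/2) * Rq y₁ y₂ (1/2) ≤ Rq y₁ y₂ a * Rq y₁ y₂ b := by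
  have hRh := Rq_pos h1 h12 (show (0:ℝ) < 1/2 by norm_num)
  have hRa := Rq_pos h1 h12 ha
  have hRb := Rq_pos h1 h12 hb
  have hlog := L_compare h1 h12 ha hb hab
  have h2 : log (Rq y₁ y₂ (1/2) * Rq y₁ y₂ (1/2)) ≤ log (Rq y₁ y₂ a * Rq y₁ y₂ b) := by
    rw [log_mul hRh.ne' hRh.ne', log_mul hRa.ne' hRb.ne']
    linarith
  calc Rq y₁ y₂ (1/2) * Rq y₁ y₂ (1/2)
      = exp (log (Rq y₁ y₂ (1/2) * Rq y₁ y₂ (1/2))) := by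
        rw [Real.exp_log (by positivity)]
    _ ≤ exp (log (Rq y₁ y₂ a * Rq y₁ y₂ b)) := Real.exp_le_exp.2 h2
    _ = Rq y₁ y₂ a * Rq y₁ y₂ b := Real.exp_log (by positivity)

/-- endpoint Gamma product inequality -/
lemma gamma_ineq_end (h1 : 0 < y₁) (h12 : y₁ < y₂) :
    Rq y₁ y₂ (1/2) * Rq y₁ y₂ (1/2) ≤ ((y₁+2)*y₂/(y₁*(y₂+2))) * Rq y₁ y₂ 1 := by
  have hy2 : 0 < y₂ := lt_trans h1 h12
  have hRh := Rq_pos h1 h12 (show (0:ℝ) < 1/2 by norm_num)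
  have hR1 := Rq_pos h1 h12 (show (0:ℝ) < 1 by norm_num)
  have hP : (0:ℝ) < (y₁+2)*y₂/(y₁*(y₂+2)) := by positivity
  have hlog := L_compare_end h1 h12
  have hPlog : log ((y₁+2)*y₂/(y₁*(y₂+2)))
      = log (y₁+2) - log y₁ - (log (y₂+2) - log y₂) := by
    rw [log_div (by positivity) (by positivity), log_mul (by positivity) hy2.ne',
      log_mul h1.ne' (by positivity)]
    ring
  have h2 : log (Rq y₁ y₂ (1/2) * Rq y₁ y₂ (1/2))
      ≤ log (((y₁+2)*y₂/(y₁*(y₂+2))) * Rq y₁ y₂ 1) := by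
    rw [log_mul hRh.ne' hRh.ne', log_mul hP.ne' hR1.ne', hPlog]
    linarith
  calc Rq y₁ y₂ (1/2) * Rq y₁ y₂ (1/2)
      = exp (log (Rq y₁ y₂ (1/2) * Rq y₁ y₂ (1/2))) := by
        rw [Real.exp_log (by positivity)]
    _ ≤ exp (log (((y₁+2)*y₂/(y₁*(y₂+2))) * Rq y₁ y₂ 1)) := Real.exp_le_exp.2 h2
    _ = ((y₁+2)*y₂/(y₁*(y₂+2))) * Rq y₁ y₂ 1 := Real.exp_log (by positivity)

/-- fCoeff in terms of Rq -/
lemma fCoeff_eq (h1 : 0 < y₁) (h12 : y₁ < y₂) {p q : ℝ} (hp : 0 < p) (hq : 0 < q) :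
    fCoeff y₁ y₂ p q
      = ((y₁+2)^2 * y₂^2 / (y₁^2*(y₂+2)^2)) / (Rq y₁ y₂ (1/p) * Rq y₁ y₂ (1/q)) := by
  have hy2 : 0 < y₂ := lt_trans h1 h12
  have ep : ∀ z : ℝ, (1/p) * z = z / p := fun z => by ring
  have eq' : ∀ z : ℝ, (1/q) * z = z / q := fun z => by ring
  unfold fCoeff Rq
  rw [ep, ep, ep, ep, eq', eq', eq', eq']
  have g1 := Real.Gamma_pos_of_pos (show (0:ℝ) < y₁/p by positivity)
  have g2 := Real.Gamma_pos_of_pos (show (0:ℝ) < (y₂+2)/p by positivity)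
  have g3 := Real.Gamma_pos_of_pos (show (0:ℝ) < (y₁+2)/p by positivity)
  have g4 := Real.Gamma_pos_of_pos (show (0:ℝ) < y₂/p by positivity)
  have g5 := Real.Gamma_pos_of_pos (show (0:ℝ) < y₁/q by positivity)
  have g6 := Real.Gamma_pos_of_pos (show (0:ℝ) < (y₂+2)/q by positivity)
  have g7 := Real.Gamma_pos_of_pos (show (0:ℝ) < (y₁+2)/q by positivity)
  have g8 := Real.Gamma_pos_of_pos (show (0:ℝ) < y₂/q by positivity)
  have hne : y₁ ≠ 0 := h1.ne'
  have hne2 : y₂ ≠ 0 := hy2.ne'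
  have hne3 : y₁ + 2 ≠ 0 := by positivity
  have hne4 : y₂ + 2 ≠ 0 := by positivity
  field_simp

end main

section final
variable {y₁ y₂ : ℝ}

lemma main_interior (h1 : 0 < y₁) (h12 : y₁ < y₂) {P : ℝ} (hP : 1 < P) :
    fCoeff y₁ y₂ P (P/(P-1)) ≤ fCoeff y₁ y₂ 2 2 := by
  have hy2 : 0 < y₂ := lt_trans h1 h12
  have hP0 : 0 < P := lt_trans one_pos hP
  have hP1 : 0 < P - 1 := by linarith
  have hQ0 : 0 < P/(P-1) := by positivity
  have ha : 0 < 1/P := by positivity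
  have hb : 0 < 1/(P/(P-1)) := by positivity
  have hab : 1/P + 1/(P/(P-1)) = 1 := by
    rw [one_div_div]
    field_simp
    ring
  rw [fCoeff_eq h1 h12 hP0 hQ0, fCoeff_eq h1 h12 two_pos two_pos]
  have hkey := gamma_ineq_interior h1 h12 ha hb hab
  have hRh := Rq_pos h1 h12 (show (0:ℝ) < 1/2 by norm_num)
  have hRa := Rq_pos h1 h12 ha
  have hRb := Rq_pos h1 h12 hb
  have hpre : (0:ℝ) ≤ (y₁+2)^2 * y₂^2 / (y₁^2*(y₂+2)^2) := by positivity
  gcongr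

lemma main_endpoint (h1 : 0 < y₁) (h12 : y₁ < y₂) :
    fCoeffOne y₁ y₂ ≤ fCoeff y₁ y₂ 2 2 := by
  have hy2 : 0 < y₂ := lt_trans h1 h12
  have hP : (0:ℝ) < (y₁+2)*y₂/(y₁*(y₂+2)) := by positivity
  have hR1 := Rq_pos h1 h12 (show (0:ℝ) < 1 by norm_num)
  have hRh := Rq_pos h1 h12 (show (0:ℝ) < 1/2 by norm_num)
  have g1 := Real.Gamma_pos_of_pos h1
  have g2 := Real.Gamma_pos_of_pos hy2
  have g3 := Real.Gamma_pos_of_pos (show (0:ℝ) < y₁+2 by linarith)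
  have g4 := Real.Gamma_pos_of_pos (show (0:ℝ) < y₂+2 by linarith)
  have e1 : fCoeffOne y₁ y₂
      = ((y₁+2)*y₂/(y₁*(y₂+2)))^2 / (((y₁+2)*y₂/(y₁*(y₂+2))) * Rq y₁ y₂ 1) := by
    unfold fCoeffOne Rq
    simp only [one_mul]
    field_simp
  have e2 : fCoeff y₁ y₂ 2 2
      = ((y₁+2)*y₂/(y₁*(y₂+2)))^2 / (Rq y₁ y₂ (1/2) * Rq y₁ y₂ (1/2)) := by
    rw [fCoeff_eq h1 h12 two_pos two_pos]
    congr 1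
    field_simp
  rw [e1, e2]
  have hkey := gamma_ineq_end h1 h12
  gcongr

end final



/-- For all `0 < y₁ < y₂` and every `p ∈ [1,∞]`, `f(y₁,y₂,p) ≤ f(y₁,y₂,2)`: the function
`p ↦ f(y₁,y₂,p)` attains its maximum on `[1,∞]` at `p = 2`. -/
theorem fCoeff_le_two (y₁ y₂ : ℝ) (hy₁ : 0 < y₁) (hy₂ : y₁ < y₂)
    (p : ℝ≥0∞) (hp : 1 ≤ p) :
    fCoeffFull y₁ y₂ p ≤ fCoeffFull y₁ y₂ 2 := by

  have h2ne : ¬((2:ℝ≥0∞) = 1 ∨ (2:ℝ≥0∞) = ∞) := by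
    push_neg
    refine ⟨by norm_num, by norm_num⟩
  have htR : ((2:ℝ≥0∞)).toReal = (2:ℝ) := by norm_num
  have hRHS : fCoeffFull y₁ y₂ 2 = fCoeff y₁ y₂ 2 2 := by
    rw [fCoeffFull, if_neg h2ne, htR]
    norm_num
  rw [hRHS]
  by_cases hp1 : p = 1 ∨ p = ∞
  · rw [fCoeffFull, if_pos hp1]
    exact main_endpoint hy₁ hy₂
  · rw [fCoeffFull, if_neg hp1]
    push_neg at hp1
    have hplt : 1 < p := lt_of_le_of_ne hp (Ne.symm hp1.1)
    have hP : 1 < p.toReal := by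
      have := (ENNReal.toReal_lt_toReal (by norm_num) hp1.2).2 hplt
      simpa using this
    exact main_interior hy₁ hy₂ hP
end

section
/- For all real numbers 0 < y₁ < y₂, the function f₁ : [0,1] → ℝ defined by f₁(x) = f(y₁, y₂, 1/x) (interpreting 1/0 as ∞) satisfies the symmetry f₁(x) = f₁(1-x) for all x ∈ [0,1], and f₁(0) = f₁(1) < f₁(1/2). -/
open Real Set

/-- `f₁(x) = f(y₁, y₂, 1/x)` for `x ∈ [0,1]`, interpreting `1/0` as `∞`;
for `x ∈ (0,1)` the exponent `p = 1/x` has dual exponent `q = 1/(1-x)`. -/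
noncomputable def fOneVar (y₁ y₂ x : ℝ) : ℝ :=
  if x = 0 ∨ x = 1 then fCoeffOne y₁ y₂
  else fCoeff y₁ y₂ (1 / x) (1 / (1 - x))

lemma gamma_add_two (y : ℝ) (hy : 0 < y) :
    Gamma (y + 2) = (y + 1) * y * Gamma y := by
  have h : y + 2 = (y + 1) + 1 := by ring
  rw [h, Real.Gamma_add_one (by positivity), Real.Gamma_add_one hy.ne']
  ring

lemma gamma_half_add (y : ℝ) (hy : 0 < y) :
    Gamma ((y + 2) / 2) = (y / 2) * Gamma (y / 2) := by
  have h : (y + 2) / 2 = y / 2 + 1 := by ring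
  rw [h, Real.Gamma_add_one (by positivity)]

lemma fCoeff_symm (y₁ y₂ p q : ℝ) : fCoeff y₁ y₂ p q = fCoeff y₁ y₂ q p := by
  unfold fCoeff
  ring_nf

/-- For `0 < y₁ < y₂`, the function `f₁(x) = f(y₁,y₂,1/x)` on `[0,1]` satisfies
`f₁(x) = f₁(1-x)` for all `x ∈ [0,1]`, and `f₁(0) = f₁(1) < f₁(1/2)`. -/
theorem fOneVar_symm_and_max (y₁ y₂ : ℝ) (hy₁ : 0 < y₁) (hy₂ : y₁ < y₂) :
    (∀ x ∈ Icc (0 : ℝ) 1, fOneVar y₁ y₂ x = fOneVar y₁ y₂ (1 - x)) ∧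
      fOneVar y₁ y₂ 0 = fOneVar y₁ y₂ 1 ∧
      fOneVar y₁ y₂ 0 < fOneVar y₁ y₂ (1 / 2) := by
  have hy₂0 : 0 < y₂ := hy₁.trans hy₂
  have hG₁ : 0 < Gamma y₁ := Real.Gamma_pos_of_pos hy₁
  have hG₂ : 0 < Gamma y₂ := Real.Gamma_pos_of_pos hy₂0
  have hGh₁ : 0 < Gamma (y₁ / 2) := Real.Gamma_pos_of_pos (by positivity)
  have hGh₂ : 0 < Gamma (y₂ / 2) := Real.Gamma_pos_of_pos (by positivity)
  refine ⟨?_, ?_, ?_⟩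
  · intro x hx
    by_cases h : x = 0 ∨ x = 1
    · have h' : (1 - x) = 0 ∨ (1 - x) = 1 := by
        rcases h with h | h <;> [right; left] <;> rw [h] <;> ring
      rw [fOneVar, fOneVar, if_pos h, if_pos h']
    · push_neg at h
      have h' : ¬((1 - x) = 0 ∨ (1 - x) = 1) := by
        push_neg
        constructor <;> intro hc
        · exact h.2 (by linarith)
        · exact h.1 (by linarith)
      simp only [fOneVar, if_neg (by tauto : ¬(x = 0 ∨ x = 1)), if_neg h']
      rw [sub_sub_cancel]
      exact fCoeff_symm _ _ _ _
  · simp [fOneVar]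
  · have h0 : fOneVar y₁ y₂ 0 = (y₁ + 2) * (y₁ + 1) / ((y₂ + 2) * (y₂ + 1)) := by
      simp only [fOneVar, if_pos (Or.inl rfl), fCoeffOne,
        gamma_add_two y₁ hy₁, gamma_add_two y₂ hy₂0, true_or, ↓reduceIte]
      field_simp
    have hhalf : fOneVar y₁ y₂ (1 / 2) = (y₁ + 2) ^ 2 / (y₂ + 2) ^ 2 := by
      have hne : ¬((1 : ℝ) / 2 = 0 ∨ (1 : ℝ) / 2 = 1) := by norm_num
      rw [fOneVar, if_neg hne]
      rw [show (1 : ℝ) - 1/2 = 1/2 by norm_num, show (1 : ℝ) / (1/2) = 2 by norm_num]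
      unfold fCoeff
      rw [gamma_half_add y₁ hy₁, gamma_half_add y₂ hy₂0]
      field_simp
    rw [h0, hhalf]
    rw [div_lt_div_iff₀ (by positivity) (by positivity)]
    nlinarith [sq_nonneg (y₂ - y₁), hy₁.le, hy₂0.le]
end

section
/- The function x ↦ x²·ψ'(x) is convex on the interval (0,∞), where ψ' is the trigamma function (the derivative of the digamma function ψ). -/
open Real Set

/-- The digamma function `ψ`, the logarithmic derivative of the Gamma function. -/
noncomputable def digamma (x : ℝ) : ℝ :=
  deriv (fun t : ℝ => Real.log (Real.Gamma t)) x

/-- The trigamma function `ψ'`, the derivative of the digamma function. -/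
noncomputable def trigamma (x : ℝ) : ℝ := deriv digamma x

open Filter Topology MeasureTheory Finset

namespace TrigammaAux

noncomputable def phi (u x : ℝ) : ℝ := (1 - Real.exp (-(u * x⁻¹)))⁻¹

lemma key0 {s : ℝ} (hs : 0 ≤ s) : 0 ≤ (s - 2) * Real.exp s + s + 2 := by
  have hmono : MonotoneOn (fun s : ℝ => (s - 2) * Real.exp s + s + 2) (Ici 0) := by
    have hder : ∀ t : ℝ, HasDerivAt (fun s : ℝ => (s - 2) * Real.exp s + s + 2)
        ((t - 1) * Real.exp t + 1) t := by
      intro t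
      have h1 : HasDerivAt (fun s : ℝ => (s - 2) * Real.exp s)
          (1 * Real.exp t + (t - 2) * Real.exp t) t :=
        ((hasDerivAt_id t).sub_const 2).mul (Real.hasDerivAt_exp t)
      have h2 := (h1.add (hasDerivAt_id t)).add_const 2
      exact h2.congr_deriv (by ring)
    refine monotoneOn_of_deriv_nonneg (convex_Ici 0) ?_ ?_ ?_
    · exact (Continuous.continuousOn (by continuity))
    · intro t _
      exact (hder t).differentiableAt.differentiableWithinAt
    · intro t ht
      rw [(hder t).deriv]
      have h3 : (1 - t) * Real.exp t ≤ 1 := by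
        have := Real.add_one_le_exp (-t)
        have h4 := mul_le_mul_of_nonneg_right (by linarith : 1 - t ≤ Real.exp (-t))
          (Real.exp_pos t).le
        rwa [← Real.exp_add, neg_add_cancel, Real.exp_zero] at h4
      nlinarith
  have := hmono (self_mem_Ici) (by exact hs) hs
  simpa using this

lemma E_pos (u x : ℝ) : 0 < Real.exp (-(u * x⁻¹)) := Real.exp_pos _

lemma E_lt_one {u x : ℝ} (hu : 0 < u) (hx : 0 < x) : Real.exp (-(u * x⁻¹)) < 1 := by
  rw [Real.exp_lt_one_iff]
  have : 0 < u * x⁻¹ := by positivity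
  linarith

lemma den_pos {u x : ℝ} (hu : 0 < u) (hx : 0 < x) : 0 < 1 - Real.exp (-(u * x⁻¹)) := by
  linarith [E_lt_one hu hx]

lemma key {u x : ℝ} (hu : 0 < u) (hx : 0 < x) :
    2 * x * (1 - Real.exp (-(u * x⁻¹))) ≤ u * (1 + Real.exp (-(u * x⁻¹))) := by
  set s := u * x⁻¹ with hs
  have hs0 : 0 < s := by positivity
  have h0 := key0 hs0.le
  set E := Real.exp (-s) with hE
  have hEe : E * Real.exp s = 1 := by rw [hE, ← Real.exp_add]; simp
  have hE0 : 0 < E := Real.exp_pos _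
  -- multiply h0 by E : 0 ≤ (s-2) + (s+2)*E
  have h1 : 0 ≤ (s - 2) + (s + 2) * E := by nlinarith
  -- multiply by x : 0 ≤ (u - 2x) + (u + 2x) E
  have hsx : s * x = u := by rw [hs]; field_simp
  have h2 : 0 ≤ (u - 2 * x) + (u + 2 * x) * E := by nlinarith
  linarith [h2]

/-- first derivative of `phi u`. -/
noncomputable def phi' (u x : ℝ) : ℝ :=
  Real.exp (-(u * x⁻¹)) * (u * (x ^ 2)⁻¹) / (1 - Real.exp (-(u * x⁻¹))) ^ 2

/-- second derivative of `phi u`. -/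
noncomputable def phi'' (u x : ℝ) : ℝ :=
  u * Real.exp (-(u * x⁻¹)) * (u * (1 + Real.exp (-(u * x⁻¹)))
    - 2 * x * (1 - Real.exp (-(u * x⁻¹))))
    / (x ^ 4 * (1 - Real.exp (-(u * x⁻¹))) ^ 3)

lemma hasDerivAt_E {u x : ℝ} (hx : x ≠ 0) :
    HasDerivAt (fun y : ℝ => Real.exp (-(u * y⁻¹))) (Real.exp (-(u * x⁻¹)) * (u * (x ^ 2)⁻¹)) x := by
  have h1 : HasDerivAt (fun y : ℝ => -(u * y⁻¹)) (u * (x ^ 2)⁻¹) x := by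
    have := ((hasDerivAt_inv hx).const_mul u).neg
    exact this.congr_deriv (by ring)
  exact (Real.hasDerivAt_exp _).comp x h1

lemma hasDerivAt_phi {u x : ℝ} (hu : 0 < u) (hx : 0 < x) :
    HasDerivAt (phi u) (phi' u x) x := by
  have h1E : HasDerivAt (fun y : ℝ => 1 - Real.exp (-(u * y⁻¹)))
      (-(Real.exp (-(u * x⁻¹)) * (u * (x ^ 2)⁻¹))) x := (hasDerivAt_E hx.ne').const_sub 1
  have := h1E.inv (den_pos hu hx).ne'
  exact this.congr_deriv (by unfold phi'; field_simp)

lemma hasDerivAt_phi' {u x : ℝ} (hu : 0 < u) (hx : 0 < x) :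
    HasDerivAt (phi' u) (phi'' u x) x := by
  set E := fun y : ℝ => Real.exp (-(u * y⁻¹)) with hEdef
  have hEx1 : E x < 1 := E_lt_one hu hx
  have hEx0 : 0 < E x := Real.exp_pos _
  have hden : (1 : ℝ) - E x ≠ 0 := (den_pos hu hx).ne'
  have hE : HasDerivAt E (E x * (u * (x ^ 2)⁻¹)) x := hasDerivAt_E hx.ne'
  have h1E : HasDerivAt (fun y => 1 - E y) (-(E x * (u * (x ^ 2)⁻¹))) x := hE.const_sub 1
  have hx2 : HasDerivAt (fun y : ℝ => ((y ^ 2)⁻¹ : ℝ)) (-(2 * x ^ 1) / (x ^ 2) ^ 2) x :=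
    (hasDerivAt_pow 2 x).inv (by positivity)
  have hdensq : HasDerivAt (fun y => ((1 - E y) ^ 2 : ℝ))
      (2 * (1 - E x) ^ 1 * -(E x * (u * (x ^ 2)⁻¹))) x := by
    exact (h1E.pow 2).congr_deriv (by norm_num)
  have hdeninv : HasDerivAt (fun y => (((1 - E y) ^ 2)⁻¹ : ℝ))
      (-(2 * (1 - E x) ^ 1 * -(E x * (u * (x ^ 2)⁻¹))) / ((1 - E x) ^ 2) ^ 2) x :=
    hdensq.inv (by positivity)
  -- phi' u y = E y * (u * (y^2)⁻¹) / (1 - E y)^2 = u * (E y * ((y^2)⁻¹ * ((1-E y)^2)⁻¹))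
  have hprod : HasDerivAt (fun y => (y ^ 2)⁻¹ * ((1 - E y) ^ 2)⁻¹)
      ((-(2 * x ^ 1) / (x ^ 2) ^ 2) * ((1 - E x) ^ 2)⁻¹
        + (x ^ 2)⁻¹ * (-(2 * (1 - E x) ^ 1 * -(E x * (u * (x ^ 2)⁻¹))) / ((1 - E x) ^ 2) ^ 2)) x :=
    hx2.mul hdeninv
  have hfull : HasDerivAt (fun y => u * (E y * ((y ^ 2)⁻¹ * ((1 - E y) ^ 2)⁻¹))) _ x :=
    (hE.mul hprod).const_mul u
  have heq : (fun y => u * (E y * ((y ^ 2)⁻¹ * ((1 - E y) ^ 2)⁻¹))) = phi' u := by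
    funext y
    unfold phi'
    simp only [hEdef]
    ring
  rw [heq] at hfull
  convert hfull using 1
  unfold phi''
  simp only [hEdef]
  have h1 : (1:ℝ) - Real.exp (-(u * x⁻¹)) ≠ 0 := (den_pos hu hx).ne'
  generalize hE' : Real.exp (-(u * x⁻¹)) = e at h1 ⊢
  rw [div_eq_iff (mul_ne_zero (pow_ne_zero _ hx.ne') (pow_ne_zero _ h1))]
  field_simp
  ring

lemma convexOn_phi {u : ℝ} (hu : 0 < u) : ConvexOn ℝ (Ioi 0) (phi u) := by
  have hderiv : ∀ x ∈ Ioi (0:ℝ), deriv (phi u) x = phi' u x := fun x hx =>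
    (hasDerivAt_phi hu hx).deriv
  refine convexOn_of_deriv2_nonneg (convex_Ioi 0) ?_ ?_ ?_ ?_
  · intro x hx
    exact (hasDerivAt_phi hu hx).continuousAt.continuousWithinAt
  · rw [interior_Ioi]
    intro x hx
    exact (hasDerivAt_phi hu hx).differentiableAt.differentiableWithinAt
  · rw [interior_Ioi]
    intro x hx
    have : DifferentiableAt ℝ (phi' u) x := (hasDerivAt_phi' hu hx).differentiableAt
    refine (this.congr_of_eventuallyEq ?_).differentiableWithinAt
    filter_upwards [Ioi_mem_nhds hx] with y hy using hderiv y hy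
  · rw [interior_Ioi]
    intro x hx
    have h1 : deriv (deriv (phi u)) x = deriv (phi' u) x := by
      apply Filter.EventuallyEq.deriv_eq
      filter_upwards [Ioi_mem_nhds hx] with y hy using hderiv y hy
    simp only [Function.iterate_succ, Function.iterate_zero, Function.comp_apply, id_eq]
    rw [h1, (hasDerivAt_phi' hu hx).deriv]
    unfold phi''
    have hx0 : (0:ℝ) < x := hx
    have hnum : 0 ≤ u * (1 + Real.exp (-(u * x⁻¹))) - 2 * x * (1 - Real.exp (-(u * x⁻¹))) :=
      sub_nonneg.mpr (key hu hx0)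
    have hden := den_pos hu hx0
    positivity

lemma integrable_g : IntegrableOn (fun v : ℝ => v * Real.exp (-v)) (Ioi 0) := by
  have h := Real.GammaIntegral_convergent (by norm_num : (0:ℝ) < 2)
  refine (h.congr_fun ?_ measurableSet_Ioi)
  intro v hv
  show Real.exp (-v) * v ^ ((2:ℝ) - 1) = v * Real.exp (-v)
  rw [show (2:ℝ) - 1 = 1 by norm_num, Real.rpow_one]
  ring

lemma integral_g : (∫ v in Ioi (0:ℝ), v * Real.exp (-v)) = 1 := by
  have h := Real.Gamma_eq_integral (by norm_num : (0:ℝ) < 2)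
  have h2 : Real.Gamma 2 = 1 := by
    rw [show (2:ℝ) = 1 + 1 by norm_num, Real.Gamma_add_one one_ne_zero, Real.Gamma_one, mul_one]
  rw [h] at h2
  rw [← h2]
  refine setIntegral_congr_fun measurableSet_Ioi (fun v hv => ?_)
  rw [show (2:ℝ) - 1 = 1 by norm_num, Real.rpow_one]
  ring

lemma integrableOn_mul_exp_neg_mul {c : ℝ} (hc : 0 < c) :
    IntegrableOn (fun u : ℝ => u * Real.exp (-(c * u))) (Ioi 0) := by
  have h : IntegrableOn (fun u : ℝ => (c * u) * Real.exp (-(c * u))) (Ioi 0) := by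
    have := (integrableOn_Ioi_comp_mul_left_iff (fun v : ℝ => v * Real.exp (-v)) 0 hc).mpr
      (by simpa using integrable_g)
    simpa using this
  have h2 : IntegrableOn (fun u : ℝ => c⁻¹ * ((c * u) * Real.exp (-(c * u)))) (Ioi 0) :=
    h.const_mul c⁻¹
  refine h2.congr_fun (fun u hu => ?_) measurableSet_Ioi
  field_simp

lemma integral_mul_exp_neg_mul {c : ℝ} (hc : 0 < c) :
    (∫ u in Ioi (0:ℝ), u * Real.exp (-(c * u))) = (c ^ 2)⁻¹ := by
  have h : (∫ u in Ioi (0:ℝ), c⁻¹ * ((c * u) * Real.exp (-(c * u))))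
      = c⁻¹ * ∫ u in Ioi (0:ℝ), (c * u) * Real.exp (-(c * u)) := integral_const_mul _ _
  have h2 : (∫ u in Ioi (0:ℝ), (c * u) * Real.exp (-(c * u))) = c⁻¹ * 1 := by
    have := integral_comp_mul_left_Ioi (fun v : ℝ => v * Real.exp (-v)) 0 hc
    simp only [mul_zero] at this
    rw [this, integral_g, smul_eq_mul]
  calc (∫ u in Ioi (0:ℝ), u * Real.exp (-(c * u)))
      = ∫ u in Ioi (0:ℝ), c⁻¹ * ((c * u) * Real.exp (-(c * u))) := by
        refine setIntegral_congr_fun measurableSet_Ioi (fun u hu => ?_)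
        field_simp
    _ = c⁻¹ * (c⁻¹ * 1) := by rw [h, h2]
    _ = (c ^ 2)⁻¹ := by field_simp

noncomputable def D (x : ℝ) : ℝ :=
  (-Real.eulerMascheroniConstant + -x⁻¹) + ∑' k : ℕ, (((k : ℝ) + 1)⁻¹ - (x + ((k : ℝ) + 1))⁻¹)

noncomputable def T (x : ℝ) : ℝ := ∑' k : ℕ, ((x + (k : ℝ)) ^ 2)⁻¹

noncomputable def gseq (n : ℕ) (x : ℝ) : ℝ :=
  x * Real.log n + Real.log (n.factorial : ℝ) - ∑ k ∈ range (n + 1), Real.log (x + (k : ℝ))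

noncomputable def dseq (n : ℕ) (x : ℝ) : ℝ :=
  Real.log n - ∑ k ∈ range (n + 1), (x + (k : ℝ))⁻¹

noncomputable def tseq (n : ℕ) (x : ℝ) : ℝ :=
  ∑ k ∈ range (n + 1), ((x + (k : ℝ)) ^ 2)⁻¹

lemma summable_base : Summable (fun k : ℕ => (((k : ℝ) + 1) ^ 2)⁻¹) := by
  have := (summable_nat_add_iff (f := fun n : ℕ => ((n : ℝ) ^ 2)⁻¹) 1).mpr
    (by simpa [one_div] using summable_one_div_nat_pow.mpr one_lt_two)
  simpa [Nat.cast_add] using this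

lemma summable_shift {x : ℝ} (hx : 0 < x) :
    Summable (fun k : ℕ => ((x + ((k : ℝ) + 1)) ^ 2)⁻¹) := by
  refine Summable.of_nonneg_of_le (fun k => by positivity) (fun k => ?_) summable_base
  have h1 : (0:ℝ) < (k : ℝ) + 1 := by positivity
  apply inv_anti₀ (by positivity)
  nlinarith

lemma summable_sq_inv {x : ℝ} (hx : 0 < x) :
    Summable (fun k : ℕ => ((x + (k : ℝ)) ^ 2)⁻¹) := by
  rw [← summable_nat_add_iff 1]
  simpa [add_assoc] using summable_shift hx

lemma summable_diff {x : ℝ} (hx : 0 < x) :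
    Summable (fun k : ℕ => (((k : ℝ) + 1)⁻¹ - (x + ((k : ℝ) + 1))⁻¹)) := by
  refine Summable.of_nonneg_of_le (fun k => ?_) (fun k => ?_)
    (summable_base.mul_left x)
  · have hk1 : (0:ℝ) < (k : ℝ) + 1 := by positivity
    have : (x + ((k:ℝ) + 1))⁻¹ ≤ ((k:ℝ) + 1)⁻¹ := inv_anti₀ hk1 (by linarith)
    linarith
  · have hk1 : (0:ℝ) < (k : ℝ) + 1 := by positivity
    have hxk : (0:ℝ) < x + ((k:ℝ) + 1) := by positivity
    have key : ((k:ℝ) + 1)⁻¹ - (x + ((k:ℝ) + 1))⁻¹ = x * (((k:ℝ) + 1) * (x + ((k:ℝ) + 1)))⁻¹ := by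
      field_simp
      ring
    rw [key]
    have h2 : (((k:ℝ) + 1) * (x + ((k:ℝ) + 1)))⁻¹ ≤ (((k:ℝ) + 1) ^ 2)⁻¹ := by
      apply inv_anti₀ (by positivity)
      nlinarith
    calc x * (((k:ℝ) + 1) * (x + ((k:ℝ) + 1)))⁻¹ ≤ x * (((k:ℝ) + 1) ^ 2)⁻¹ := by
          exact mul_le_mul_of_nonneg_left h2 hx.le
      _ = x * (((k:ℝ) + 1) ^ 2)⁻¹ := rfl

lemma gseq_tendsto {x : ℝ} (hx : 0 < x) :
    Tendsto (fun n => gseq n x) atTop (𝓝 (Real.log (Real.Gamma x))) := by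
  have h1 : Tendsto (fun n => Real.log (Real.GammaSeq x n)) atTop
      (𝓝 (Real.log (Real.Gamma x))) :=
    ((Real.continuousAt_log (Real.Gamma_pos_of_pos hx).ne').tendsto).comp
      (Real.GammaSeq_tendsto_Gamma x)
  refine h1.congr' ?_
  filter_upwards [eventually_ge_atTop 1] with n hn
  have hn0 : (0:ℝ) < (n : ℝ) := by exact_mod_cast hn
  have hprod_pos : (0:ℝ) < ∏ j ∈ range (n + 1), (x + (j : ℝ)) :=
    Finset.prod_pos fun j _ => by positivity
  rw [Real.GammaSeq, Real.log_div (by positivity) hprod_pos.ne',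
    Real.log_mul (by positivity) (by positivity), Real.log_rpow hn0,
    Real.log_prod (fun j _ => by positivity)]
  rfl

lemma hasDerivAt_gseq (n : ℕ) {x : ℝ} (hx : 0 < x) :
    HasDerivAt (gseq n) (dseq n x) x := by
  have hsum : HasDerivAt (fun y : ℝ => ∑ k ∈ range (n + 1), Real.log (y + (k : ℝ)))
      (∑ k ∈ range (n + 1), (x + (k : ℝ))⁻¹) x := by
    apply HasDerivAt.fun_sum
    intro k _
    have hxk : x + (k : ℝ) ≠ 0 := by positivity
    have h := (Real.hasDerivAt_log hxk).comp x ((hasDerivAt_id x).add_const (k : ℝ))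
    exact h.congr_deriv (by simp)
  have h1 : HasDerivAt (fun y : ℝ => y * Real.log n + Real.log (n.factorial : ℝ))
      (Real.log n) x := by
    simpa using ((hasDerivAt_id x).mul_const (Real.log n)).add_const (Real.log (n.factorial : ℝ))
  exact h1.sub hsum

lemma hasDerivAt_dseq (n : ℕ) {x : ℝ} (hx : 0 < x) :
    HasDerivAt (dseq n) (tseq n x) x := by
  have hsum : HasDerivAt (fun y : ℝ => ∑ k ∈ range (n + 1), (y + (k : ℝ))⁻¹)
      (∑ k ∈ range (n + 1), -((x + (k : ℝ)) ^ 2)⁻¹) x := by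
    apply HasDerivAt.fun_sum
    intro k _
    have hxk : x + (k : ℝ) ≠ 0 := by positivity
    have h := (hasDerivAt_inv hxk).comp x ((hasDerivAt_id x).add_const (k : ℝ))
    exact h.congr_deriv (by simp)
  have h := (hasDerivAt_const x (Real.log n)).sub hsum
  refine h.congr_deriv ?_
  rw [tseq, Finset.sum_neg_distrib]
  ring

lemma dseq_eq (n : ℕ) (x : ℝ) :
    dseq n x = ((Real.log n - (harmonic n : ℝ)) + -x⁻¹)
      + ∑ k ∈ range n, (((k : ℝ) + 1)⁻¹ - (x + ((k : ℝ) + 1))⁻¹) := by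
  have h1 : ((harmonic n : ℚ) : ℝ) = ∑ k ∈ range n, ((k : ℝ) + 1)⁻¹ := by
    rw [harmonic]
    push_cast
    rfl
  rw [dseq, h1, Finset.sum_sub_distrib,
    Finset.sum_range_succ' (fun k => (x + (k : ℝ))⁻¹) n]
  push_cast
  ring

lemma trivial_unif {f : ℝ → ℝ} {s : Set ℝ} :
    TendstoUniformlyOn (fun _ : ℕ => f) f atTop s := by
  refine Metric.tendstoUniformlyOn_iff.mpr fun ε hε => Eventually.of_forall fun n x hx => ?_
  simpa using hε

lemma dseq_tendsto : TendstoLocallyUniformlyOn dseq D atTop (Ioi 0) := by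
  rw [tendstoLocallyUniformlyOn_iff_forall_isCompact isOpen_Ioi]
  intro K hK hKc
  rcases hKc.bddAbove with ⟨M, hM⟩
  set M' : ℝ := max M 1 with hM'
  have hM'1 : (1:ℝ) ≤ M' := le_max_right _ _
  have hKM : K ⊆ Ioc 0 M' := fun y hy => ⟨hK hy, le_trans (hM hy) (le_max_left _ _)⟩
  refine TendstoUniformlyOn.mono ?_ hKM
  have h1 : TendstoUniformlyOn
      (fun n x => ∑ k ∈ range n, (((k : ℝ) + 1)⁻¹ - (x + ((k : ℝ) + 1))⁻¹))
      (fun x => ∑' k : ℕ, (((k : ℝ) + 1)⁻¹ - (x + ((k : ℝ) + 1))⁻¹)) atTop (Ioc 0 M') := by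
    apply tendstoUniformlyOn_tsum_nat (u := fun k => M' * (((k : ℝ) + 1) ^ 2)⁻¹)
      (summable_base.mul_left M')
    intro k x hx
    obtain ⟨hx0, hxM⟩ := hx
    have hk1 : (0:ℝ) < (k : ℝ) + 1 := by positivity
    have hxk : (0:ℝ) < x + ((k : ℝ) + 1) := by positivity
    have hmono : (x + ((k : ℝ) + 1))⁻¹ ≤ ((k : ℝ) + 1)⁻¹ :=
      inv_anti₀ hk1 (by linarith)
    rw [Real.norm_eq_abs, abs_of_nonneg (by linarith)]
    have key : ((k:ℝ) + 1)⁻¹ - (x + ((k:ℝ) + 1))⁻¹ = x * (((k:ℝ) + 1) * (x + ((k:ℝ) + 1)))⁻¹ := by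
      field_simp
      ring
    rw [key]
    have h2 : (((k:ℝ) + 1) * (x + ((k:ℝ) + 1)))⁻¹ ≤ (((k:ℝ) + 1) ^ 2)⁻¹ := by
      apply inv_anti₀ (by positivity)
      nlinarith
    exact mul_le_mul hxM h2 (by positivity) (by linarith)
  have h2 : TendstoUniformlyOn (fun (n : ℕ) (_ : ℝ) => Real.log n - (harmonic n : ℝ))
      (fun _ => -Real.eulerMascheroniConstant) atTop (Ioc 0 M') := by
    apply Filter.Tendsto.tendstoUniformlyOn_const
    simpa [neg_sub] using Real.tendsto_harmonic_sub_log.neg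
  have h3 : TendstoUniformlyOn (fun (_ : ℕ) (x : ℝ) => -x⁻¹) (fun x : ℝ => -x⁻¹)
      atTop (Ioc 0 M') := trivial_unif
  have hcomb := (h2.add h3).add h1
  refine (hcomb.congr ?_).congr_right ?_
  · filter_upwards with n
    intro x hx
    simp only [Pi.add_apply]
    exact (dseq_eq n x).symm
  · intro x hx
    simp only [Pi.add_apply, D]

lemma tseq_eq (n : ℕ) (x : ℝ) :
    tseq n x = (x ^ 2)⁻¹ + ∑ k ∈ range n, ((x + ((k : ℝ) + 1)) ^ 2)⁻¹ := by
  rw [tseq, Finset.sum_range_succ' (fun k => ((x + (k : ℝ)) ^ 2)⁻¹) n]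
  push_cast
  ring

lemma T_eq {x : ℝ} (hx : 0 < x) :
    T x = (x ^ 2)⁻¹ + ∑' k : ℕ, ((x + ((k : ℝ) + 1)) ^ 2)⁻¹ := by
  rw [T, Summable.tsum_eq_zero_add (summable_sq_inv hx)]
  push_cast
  norm_num

lemma tseq_tendsto : TendstoLocallyUniformlyOn tseq T atTop (Ioi 0) := by
  have h1 : TendstoUniformlyOn
      (fun n x => ∑ k ∈ range n, ((x + ((k : ℝ) + 1)) ^ 2)⁻¹)
      (fun x => ∑' k : ℕ, ((x + ((k : ℝ) + 1)) ^ 2)⁻¹) atTop (Ioi 0) := by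
    apply tendstoUniformlyOn_tsum_nat (u := fun k => (((k : ℝ) + 1) ^ 2)⁻¹) summable_base
    intro k x hx
    have hx0 : (0:ℝ) < x := hx
    have hk1 : (0:ℝ) < (k : ℝ) + 1 := by positivity
    rw [Real.norm_eq_abs, abs_of_nonneg (by positivity)]
    apply inv_anti₀ (by positivity)
    nlinarith
  have h2 : TendstoUniformlyOn (fun (_ : ℕ) (x : ℝ) => (x ^ 2)⁻¹) (fun x : ℝ => (x ^ 2)⁻¹)
      atTop (Ioi 0) := trivial_unif
  have hcomb := h2.add h1
  refine ((hcomb.congr ?_).congr_right ?_).tendstoLocallyUniformlyOn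
  · filter_upwards with n
    intro x hx
    simp only [Pi.add_apply]
    exact (tseq_eq n x).symm
  · intro x hx
    simp only [Pi.add_apply]
    exact (T_eq hx).symm

-- bound : phi u x ≤ (x + u)/u for u, x > 0
lemma phi_le {u x : ℝ} (hu : 0 < u) (hx : 0 < x) : phi u x ≤ (x + u) / u := by
  have hden := den_pos hu hx
  have hxu : (0:ℝ) < x + u := by positivity
  have h3 : u + x ≤ x * Real.exp (u * x⁻¹) := by
    have h := Real.add_one_le_exp (u * x⁻¹)
    have h' : x * (u * x⁻¹ + 1) = u + x := by field_simp
    nlinarith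
  have h2 : Real.exp (-(u * x⁻¹)) * (x + u) ≤ x := by
    have h4 : Real.exp (-(u * x⁻¹)) * Real.exp (u * x⁻¹) = 1 := by rw [← Real.exp_add]; simp
    nlinarith [Real.exp_pos (-(u * x⁻¹))]
  have h5 : u / (x + u) ≤ 1 - Real.exp (-(u * x⁻¹)) := by
    rw [div_le_iff₀ hxu]; nlinarith
  calc phi u x ≤ (u / (x + u))⁻¹ := inv_anti₀ (by positivity) h5
    _ = (x + u) / u := by rw [inv_div]

lemma integrable_phi {x : ℝ} (hx : 0 < x) :
    IntegrableOn (fun u : ℝ => u * Real.exp (-u) * phi u x) (Ioi 0) := by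
  have hmeas : AEStronglyMeasurable (fun u : ℝ => u * Real.exp (-u) * phi u x)
      (volume.restrict (Ioi 0)) := by
    apply ContinuousOn.aestronglyMeasurable _ measurableSet_Ioi
    apply ContinuousOn.mul
    · exact (continuous_id.mul (continuous_neg.rexp)).continuousOn
    · apply ContinuousOn.inv₀
      · fun_prop
      · intro u hu
        exact (den_pos hu hx).ne'
  have hbound : IntegrableOn (fun u : ℝ => u * Real.exp (-u) + x * Real.exp (-u)) (Ioi 0) := by
    apply Integrable.add
    · exact (by simpa using integrableOn_mul_exp_neg_mul one_pos :
          IntegrableOn (fun u : ℝ => u * Real.exp (-u)) (Ioi 0))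
    · have h : IntegrableOn (fun u : ℝ => x * Real.exp (-1 * u)) (Ioi 0) :=
        (exp_neg_integrableOn_Ioi 0 one_pos).const_mul x
      refine h.congr_fun (fun u hu => ?_) measurableSet_Ioi
      norm_num
  refine Integrable.mono' hbound hmeas ?_
  filter_upwards [ae_restrict_mem measurableSet_Ioi] with u hu
  have hu0 : (0:ℝ) < u := hu
  have hphi_pos : 0 < phi u x := inv_pos.mpr (den_pos hu0 hx)
  have h1 : phi u x ≤ (x + u) / u := phi_le hu0 hx
  rw [Real.norm_of_nonneg (by positivity)]
  calc u * Real.exp (-u) * phi u x ≤ u * Real.exp (-u) * ((x + u) / u) := by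
        apply mul_le_mul_of_nonneg_left h1 (by positivity)
    _ = u * Real.exp (-u) + x * Real.exp (-u) := by field_simp; ring

lemma sq_mul_T_eq {x : ℝ} (hx : 0 < x) :
    x ^ 2 * T x = ∫ u in Ioi (0:ℝ), u * Real.exp (-u) * phi u x := by
  have hsum := summable_sq_inv hx
  -- per-term functions
  set F : ℕ → ℝ → ℝ := fun k u => u * Real.exp (-u) * Real.exp (-(u * x⁻¹)) ^ k with hF
  have hFc : ∀ k : ℕ, ∀ u : ℝ, F k u = u * Real.exp (-(((x + k) / x) * u)) := by
    intro k u
    rw [hF]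
    simp only
    rw [← Real.exp_nat_mul, mul_assoc, ← Real.exp_add]
    congr 1
    field_simp
    ring
  have hc : ∀ k : ℕ, 0 < (x + (k:ℝ)) / x := fun k => by positivity
  have hF_int : ∀ k : ℕ, IntegrableOn (F k) (Ioi 0) := by
    intro k
    refine (integrableOn_mul_exp_neg_mul (hc k)).congr_fun (fun u hu => (hFc k u).symm)
      measurableSet_Ioi
  have hF_val : ∀ k : ℕ, (∫ u in Ioi (0:ℝ), F k u) = x ^ 2 * ((x + (k:ℝ)) ^ 2)⁻¹ := by
    intro k
    rw [show (∫ u in Ioi (0:ℝ), F k u) = ∫ u in Ioi (0:ℝ), u * Real.exp (-(((x + k) / x) * u))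
      from setIntegral_congr_fun measurableSet_Ioi fun u _ => hFc k u]
    rw [integral_mul_exp_neg_mul (hc k)]
    rw [div_pow]
    rw [inv_div]
    field_simp
  have hF_norm : ∀ k : ℕ, (∫ u in Ioi (0:ℝ), ‖F k u‖) = x ^ 2 * ((x + (k:ℝ)) ^ 2)⁻¹ := by
    intro k
    rw [← hF_val k]
    refine setIntegral_congr_fun measurableSet_Ioi (fun u hu => ?_)
    have hu0 : (0:ℝ) < u := hu
    rw [Real.norm_of_nonneg (by positivity)]
  have hsum2 : Summable fun k : ℕ => (∫ u in Ioi (0:ℝ), ‖F k u‖) := by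
    simp_rw [hF_norm]
    exact hsum.mul_left _
  have hinterchange := MeasureTheory.integral_tsum_of_summable_integral_norm hF_int hsum2
  have hlhs : x ^ 2 * T x = ∑' k : ℕ, (∫ u in Ioi (0:ℝ), F k u) := by
    rw [T, ← tsum_mul_left]
    exact tsum_congr fun k => (hF_val k).symm
  rw [hlhs, hinterchange]
  refine setIntegral_congr_fun measurableSet_Ioi (fun u hu => ?_)
  have hu0 : (0:ℝ) < u := hu
  have hr0 : 0 ≤ Real.exp (-(u * x⁻¹)) := (Real.exp_pos _).le
  have hr1 : Real.exp (-(u * x⁻¹)) < 1 := by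
    rw [Real.exp_lt_one_iff]
    have : 0 < u * x⁻¹ := by positivity
    linarith
  rw [hF]
  simp only
  rw [tsum_mul_left, tsum_geometric_of_lt_one hr0 hr1, phi]

lemma trigamma_eq {x : ℝ} (hx : 0 < x) : trigamma x = T x := by
  have hD : ∀ y ∈ Ioi (0:ℝ), HasDerivAt (fun t : ℝ => Real.log (Real.Gamma t)) (D y) y := by
    intro y hy
    exact hasDerivAt_of_tendstoLocallyUniformlyOn isOpen_Ioi dseq_tendsto
      (Eventually.of_forall fun n => fun z hz => hasDerivAt_gseq n hz)
      (fun z hz => gseq_tendsto hz) hy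
  have hdig : ∀ y ∈ Ioi (0:ℝ), digamma y = D y := fun y hy => (hD y hy).deriv
  have hT : HasDerivAt D (T x) x :=
    hasDerivAt_of_tendstoLocallyUniformlyOn isOpen_Ioi tseq_tendsto
      (Eventually.of_forall fun n => fun z hz => hasDerivAt_dseq n hz)
      (fun z hz => dseq_tendsto.tendsto_at hz) hx
  have : trigamma x = deriv D x := by
    apply Filter.EventuallyEq.deriv_eq
    filter_upwards [Ioi_mem_nhds hx] with y hy using hdig y hy
  rw [this, hT.deriv]

end TrigammaAux

open TrigammaAux in
/-- The function `x ↦ x²·ψ'(x)` is convex on `(0,∞)`. -/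
theorem convexOn_sq_mul_trigamma :
    ConvexOn ℝ (Ioi (0 : ℝ)) (fun x : ℝ => x ^ 2 * trigamma x) := by
  refine ⟨convex_Ioi 0, ?_⟩
  intro x hx y hy a b ha hb hab
  have hz : a • x + b • y ∈ Ioi (0:ℝ) := (convex_Ioi 0) hx hy ha hb hab
  simp only [smul_eq_mul] at *
  rw [trigamma_eq hx, trigamma_eq hy, trigamma_eq hz, sq_mul_T_eq hx, sq_mul_T_eq hy,
    sq_mul_T_eq hz]
  have hle : ∀ u ∈ Ioi (0:ℝ), u * Real.exp (-u) * phi u (a * x + b * y)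
      ≤ a * (u * Real.exp (-u) * phi u x) + b * (u * Real.exp (-u) * phi u y) := by
    intro u hu
    have hcv := (convexOn_phi hu).2 hx hy ha hb hab
    simp only [smul_eq_mul] at hcv
    have hu' : (0:ℝ) < u := hu
    have hw : 0 ≤ u * Real.exp (-u) := by positivity
    nlinarith [mul_le_mul_of_nonneg_left hcv hw]
  have h1 : IntegrableOn (fun u : ℝ => u * Real.exp (-u) * phi u (a * x + b * y)) (Ioi 0) :=
    integrable_phi hz
  have h2 : IntegrableOn (fun u : ℝ => a * (u * Real.exp (-u) * phi u x)
      + b * (u * Real.exp (-u) * phi u y)) (Ioi 0) :=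
    (((integrable_phi hx).const_mul a).add ((integrable_phi hy).const_mul b))
  calc (∫ u in Ioi (0:ℝ), u * Real.exp (-u) * phi u (a * x + b * y))
      ≤ ∫ u in Ioi (0:ℝ), (a * (u * Real.exp (-u) * phi u x)
          + b * (u * Real.exp (-u) * phi u y)) := by
        refine setIntegral_mono_on h1 h2 measurableSet_Ioi hle
    _ = a * (∫ u in Ioi (0:ℝ), u * Real.exp (-u) * phi u x)
          + b * (∫ u in Ioi (0:ℝ), u * Real.exp (-u) * phi u y) := by
        rw [integral_add ((integrable_phi hx).const_mul a) ((integrable_phi hy).const_mul b),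
          integral_const_mul, integral_const_mul]
end

section
/- The function t ↦ t/(1 − e^{−t}) is convex on the interval (0,∞). -/
open Real Set

private lemma expNeg_hasDerivAt (x : ℝ) :
    HasDerivAt (fun t : ℝ => Real.exp (-t)) (-Real.exp (-x)) x := by
  simpa using (hasDerivAt_neg x).exp

private lemma key_nonneg : ∀ x : ℝ, 0 ≤ x → 0 ≤ x - 2 + (x + 2) * Real.exp (-x) := by
  set H : ℝ → ℝ := fun t => t - 2 + (t + 2) * Real.exp (-t) with hH
  have hder : ∀ x : ℝ, HasDerivAt H (1 - (x + 1) * Real.exp (-x)) x := by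
    intro x
    have h1 : HasDerivAt H (1 + (1 * Real.exp (-x) + (x + 2) * (-Real.exp (-x)))) x := by
      have := ((hasDerivAt_id x).sub_const 2).add
        (((hasDerivAt_id x).add_const 2).mul (expNeg_hasDerivAt x))
      exact this
    convert h1 using 1; ring
  have hmono : MonotoneOn H (Ici (0 : ℝ)) := by
    apply monotoneOn_of_deriv_nonneg (convex_Ici 0)
    · exact fun x _ => ((hder x).continuousAt).continuousWithinAt
    · intro x _
      exact ((hder x).differentiableAt).differentiableWithinAt
    · intro x hx
      rw [(hder x).deriv]
      have hx0 : (0 : ℝ) ≤ x := le_of_lt (by simpa using hx)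
      have h2 : (x + 1) * Real.exp (-x) ≤ 1 := by
        have h3 := Real.add_one_le_exp x
        have he : Real.exp (-x) > 0 := Real.exp_pos _
        have hprod : Real.exp x * Real.exp (-x) = 1 := by
          rw [← Real.exp_add]; simp
        nlinarith
      linarith
  intro x hx
  have h0 : H 0 = 0 := by simp [hH]
  have := hmono (mem_Ici.mpr le_rfl) (mem_Ici.mpr hx) hx
  rw [h0] at this
  exact this

private lemma u_pos {x : ℝ} (hx : 0 < x) : 0 < 1 - Real.exp (-x) := by
  have : Real.exp (-x) < 1 := by
    rw [Real.exp_lt_one_iff]; linarith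
  linarith

noncomputable def gAux : ℝ → ℝ :=
  fun t => (1 - Real.exp (-t) - t * Real.exp (-t)) / (1 - Real.exp (-t)) ^ 2

private lemma f_hasDerivAt {x : ℝ} (hx : 0 < x) :
    HasDerivAt (fun t : ℝ => t / (1 - Real.exp (-t))) (gAux x) x := by
  have hu : HasDerivAt (fun t : ℝ => 1 - Real.exp (-t)) (Real.exp (-x)) x := by
    simpa using (expNeg_hasDerivAt x).const_sub 1
  have hne : 1 - Real.exp (-x) ≠ 0 := ne_of_gt (u_pos hx)
  have := (hasDerivAt_id x).div hu hne
  refine this.congr_deriv ?_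
  unfold gAux
  field_simp
  simp only [id_eq]; ring

private lemma g_hasDerivAt {x : ℝ} (hx : 0 < x) :
    HasDerivAt gAux
      ((x * Real.exp (-x) * (1 - Real.exp (-x)) ^ 2 -
        (1 - Real.exp (-x) - x * Real.exp (-x)) *
          (2 * (1 - Real.exp (-x)) * Real.exp (-x))) / ((1 - Real.exp (-x)) ^ 2) ^ 2) x := by
  have hu : HasDerivAt (fun t : ℝ => 1 - Real.exp (-t)) (Real.exp (-x)) x := by
    simpa using (expNeg_hasDerivAt x).const_sub 1
  have hN : HasDerivAt (fun t : ℝ => 1 - Real.exp (-t) - t * Real.exp (-t))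
      (x * Real.exp (-x)) x := by
    have h4 := hu.sub ((hasDerivAt_id x).mul (expNeg_hasDerivAt x))
    simp only [id_eq] at h4
    refine h4.congr_deriv ?_; ring
  have hd : HasDerivAt (fun t : ℝ => (1 - Real.exp (-t)) ^ 2)
      (2 * (1 - Real.exp (-x)) * Real.exp (-x)) x := by
    have := hu.pow 2
    refine this.congr_deriv ?_; ring
  have hne : (1 - Real.exp (-x)) ^ 2 ≠ 0 := pow_ne_zero _ (ne_of_gt (u_pos hx))
  exact hN.div hd hne

private lemma deriv_eq_g {x : ℝ} (hx : x ∈ Ioi (0 : ℝ)) :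
    deriv (fun t : ℝ => t / (1 - Real.exp (-t))) x = gAux x :=
  (f_hasDerivAt hx).deriv

/-- The function `t ↦ t/(1 − e^{−t})` is convex on `(0,∞)`. -/
theorem convexOn_div_one_sub_exp_neg :
    ConvexOn ℝ (Ioi (0 : ℝ)) (fun t : ℝ => t / (1 - Real.exp (-t))) := by
  set f : ℝ → ℝ := fun t => t / (1 - Real.exp (-t)) with hf
  have heq : ∀ x ∈ Ioi (0 : ℝ), deriv f =ᶠ[nhds x] gAux := fun x hx =>
    Filter.eventuallyEq_of_mem (isOpen_Ioi.mem_nhds hx) (fun y hy => deriv_eq_g hy)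
  apply convexOn_of_deriv2_nonneg' (convex_Ioi 0)
  · intro x hx
    exact (f_hasDerivAt hx).differentiableAt.differentiableWithinAt
  · intro x hx
    have hg := (g_hasDerivAt hx).congr_of_eventuallyEq (heq x hx)
    exact hg.differentiableAt.differentiableWithinAt
  · intro x hx
    have hg := (g_hasDerivAt hx).congr_of_eventuallyEq (heq x hx)
    have h2 : deriv^[2] f x = deriv (deriv f) x := rfl
    rw [h2, hg.deriv]
    have hu := u_pos hx
    have he := Real.exp_pos (-x)
    have hkey := key_nonneg x (le_of_lt hx)
    have hnum : x * Real.exp (-x) * (1 - Real.exp (-x)) ^ 2 -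
        (1 - Real.exp (-x) - x * Real.exp (-x)) *
          (2 * (1 - Real.exp (-x)) * Real.exp (-x)) =
        (1 - Real.exp (-x)) * Real.exp (-x) * (x - 2 + (x + 2) * Real.exp (-x)) := by
      ring
    rw [hnum]
    positivity
end
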